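/- arXiv:1406.5788 — 7 statements merged into one kernel-verified Lean document; each statement's English description precedes it below -/
import Mathlib

section
/- Let K be a field of characteristic zero, S ⊆ ℤ≥0 an additive semigroup containing 0, and S₀ ⊆ S a subset such that whenever s ∈ S₀ and s = s' + s'' with s', s'' ∈ S, then s' = 0 or s'' = 0. If α ∈ K[[t]] with α(0) ≠ 0 satisfies: (i) all exponents of α with nonzero coefficient lie in S, and (ii) every element of S₀ occurs as an exponent of α with nonzero coefficient; then the inverse γ = α⁻¹ also satisfies (i) and (ii). -/
/-- Let `S ⊆ ℕ` be an additive submonoid and `S₀ ⊆ S` a set of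
indecomposable elements of `S` (if `s ∈ S₀` and `s = s' + s''` with `s', s'' ∈ S`,
then `s' = 0` or `s'' = 0`).  If `α ∈ K[[t]]` has nonzero constant term, is supported
on `S`, and has nonzero coefficient at every element of `S₀`, then the inverse
`γ = α⁻¹` is supported on `S` and has nonzero coefficient at every element of `S₀`. -/
theorem inv_mem_O_star {K : Type*} [Field K] [CharZero K]
    (S : AddSubmonoid ℕ) (S₀ : Set ℕ) (hS₀S : S₀ ⊆ (S : Set ℕ))
    (hind : ∀ s ∈ S₀, ∀ s' ∈ S, ∀ s'' ∈ S, s = s' + s'' → s' = 0 ∨ s'' = 0)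
    (α : PowerSeries K)
    (h0 : PowerSeries.constantCoeff α ≠ 0)
    (hsupp : ∀ r : ℕ, PowerSeries.coeff r α ≠ 0 → r ∈ S)
    (hstar : ∀ s ∈ S₀, PowerSeries.coeff s α ≠ 0) :
    (∀ r : ℕ, PowerSeries.coeff r α⁻¹ ≠ 0 → r ∈ S) ∧
      (∀ s ∈ S₀, PowerSeries.coeff s α⁻¹ ≠ 0) := by
  have hA : ∀ n : ℕ, PowerSeries.coeff n α⁻¹ ≠ 0 → n ∈ S := by
    intro n
    induction n using Nat.strong_induction_on with
    | _ n ih =>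
      intro hn
      rcases eq_or_ne n 0 with rfl | hne
      · exact S.zero_mem
      · rw [PowerSeries.coeff_inv, if_neg hne] at hn
        have hex : ∃ p ∈ Finset.HasAntidiagonal.antidiagonal n,
            (if p.2 < n then PowerSeries.coeff p.1 α * PowerSeries.coeff p.2 α⁻¹
              else 0) ≠ 0 := by
          by_contra h
          push_neg at h
          rw [Finset.sum_eq_zero h, mul_zero] at hn
          exact hn rfl
        obtain ⟨⟨i, j⟩, hmem, hne'⟩ := hex
        rw [Finset.HasAntidiagonal.mem_antidiagonal] at hmem
        by_cases hj : j < n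
        · rw [if_pos hj] at hne'
          have hi := hsupp i (left_ne_zero_of_mul hne')
          have hjS := ih j hj (right_ne_zero_of_mul hne')
          exact hmem ▸ S.add_mem hi hjS
        · simp [hj] at hne'
  refine ⟨hA, ?_⟩
  intro s hs
  rcases eq_or_ne s 0 with rfl | hne
  · rw [PowerSeries.coeff_inv, if_pos rfl]
    exact inv_ne_zero h0
  · rw [PowerSeries.coeff_inv, if_neg hne]
    have hsum : ∑ p ∈ Finset.HasAntidiagonal.antidiagonal s,
        (if p.2 < s then PowerSeries.coeff p.1 α * PowerSeries.coeff p.2 α⁻¹ else 0)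
        = PowerSeries.coeff s α * (PowerSeries.constantCoeff α)⁻¹ := by
      rw [Finset.sum_eq_single (s, 0)]
      · rw [if_pos (Nat.pos_of_ne_zero hne)]
        congr 1
        rw [PowerSeries.coeff_inv, if_pos rfl]
      · rintro ⟨i, j⟩ hmem hneq
        rw [Finset.HasAntidiagonal.mem_antidiagonal] at hmem
        split_ifs with hj
        · by_contra hmul
          have hiS := hsupp i (left_ne_zero_of_mul hmul)
          have hjS := hA j (right_ne_zero_of_mul hmul)
          rcases hind s hs i hiS j hjS hmem.symm with hi0 | hj0
          · subst hi0; omega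
          · subst hj0
            exact hneq (by simp [← hmem])
        · rfl
      · intro habs
        exact absurd (by simp) habs
    rw [hsum]
    exact mul_ne_zero (neg_ne_zero.mpr (inv_ne_zero h0))
      (mul_ne_zero (hstar s hs) (inv_ne_zero h0))
end

section
/- Let m be a nonzero integer and let α, γ ∈ K[[t]] with α(0) ≠ 0 satisfy (t·α(t))^m = t^m · γ(t) (as formal Laurent series when m < 0). Then for an additive semigroup S ⊆ ℤ≥0 containing 0, α is supported on S if and only if γ is supported on S. -/
open PowerSeries

section Aux

variable {K : Type*} [Field K] (S : AddSubmonoid ℕ)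

private def OnS (φ : PowerSeries K) : Prop :=
  ∀ r : ℕ, PowerSeries.coeff r φ ≠ 0 → r ∈ S

private lemma onS_mul {φ ψ : PowerSeries K} (hφ : OnS S φ) (hψ : OnS S ψ) :
    OnS S (φ * ψ) := by
  intro r hr
  rw [PowerSeries.coeff_mul] at hr
  by_contra hrS
  apply hr
  apply Finset.sum_eq_zero
  rintro ⟨i, j⟩ hij
  rw [Finset.HasAntidiagonal.mem_antidiagonal] at hij
  by_contra hne
  exact hrS (hij ▸ S.add_mem (hφ i fun h => hne (by simp [h]))
    (hψ j fun h => hne (by simp [h])))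

private lemma onS_pow {φ : PowerSeries K} (hφ : OnS S φ) (n : ℕ) : OnS S (φ ^ n) := by
  induction n with
  | zero =>
    intro r hr
    rw [pow_zero, PowerSeries.coeff_one] at hr
    split_ifs at hr with h
    · exact h ▸ S.zero_mem
    · exact absurd rfl hr
  | succ k ih => rw [pow_succ]; exact onS_mul S ih hφ

private lemma onS_of_mul_eq_one {φ ψ : PowerSeries K} (h1 : φ * ψ = 1)
    (hφ : OnS S φ) : OnS S ψ := by
  have hφ0 : PowerSeries.constantCoeff φ ≠ 0 := by
    intro h
    have := congrArg (PowerSeries.constantCoeff) h1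
    simp [h] at this
  intro r
  induction r using Nat.strong_induction_on with
  | _ r ih =>
    intro hr
    by_contra hrS
    rcases Nat.eq_zero_or_pos r with h0 | hpos
    · exact hrS (h0 ▸ S.zero_mem)
    have hc : PowerSeries.coeff r (φ * ψ) = 0 := by
      rw [h1, PowerSeries.coeff_one, if_neg (by omega : ¬ r = 0)]
    rw [PowerSeries.coeff_mul] at hc
    rw [Finset.sum_eq_single (0, r)] at hc
    · simp only [PowerSeries.coeff_zero_eq_constantCoeff] at hc
      exact hr ((mul_eq_zero.mp hc).resolve_left hφ0)
    · rintro ⟨i, j⟩ hij hne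
      rw [Finset.HasAntidiagonal.mem_antidiagonal] at hij
      have hi : i ≠ 0 := fun h => hne (by simp [Prod.ext_iff, h, ← hij])
      have hj : j < r := by omega
      by_contra hne0
      have hiS := hφ i fun h => hne0 (by simp [h])
      have hjS := ih j hj fun h => hne0 (by simp [h])
      exact hrS (hij ▸ S.add_mem hiS hjS)
    · intro h
      exact absurd (Finset.HasAntidiagonal.mem_antidiagonal.mpr (by simp)) h

private lemma binom_aux {R : Type*} [CommRing R] (a b : R) (n : ℕ) :
    ∃ c, (a + b) ^ (n + 1) = a ^ (n + 1) + (n + 1) • (a ^ n * b) + b ^ 2 * c := by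
  induction n with
  | zero => exact ⟨0, by simp [nsmul_eq_mul]⟩
  | succ k ih =>
    obtain ⟨c, hc⟩ := ih
    refine ⟨a * c + ((k : R) + 1) * a ^ k + b * c, ?_⟩
    rw [pow_succ, hc]
    simp only [nsmul_eq_mul]
    push_cast
    ring

private lemma onS_root [CharZero K] {α : PowerSeries K}
    (h0 : PowerSeries.constantCoeff α ≠ 0) (n : ℕ)
    (h : OnS S (α ^ (n + 1))) : OnS S α := by
  intro r
  induction r using Nat.strong_induction_on with
  | _ r ih =>
    intro hr
    by_contra hrS
    rcases Nat.eq_zero_or_pos r with hz | hpos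
    · exact hrS (hz ▸ S.zero_mem)
    set α' : PowerSeries K :=
      PowerSeries.mk (fun i => if i < r then PowerSeries.coeff i α else 0) with hα'
    have hα'S : OnS S α' := by
      intro i hi
      rw [hα', PowerSeries.coeff_mk] at hi
      split_ifs at hi with hlt
      · exact ih i hlt hi
      · exact absurd rfl hi
    set δ : PowerSeries K := α - α' with hδ
    have hδlow : ∀ i < r, PowerSeries.coeff i δ = 0 := by
      intro i hi
      rw [hδ, map_sub, hα', PowerSeries.coeff_mk, if_pos hi, sub_self]
    have hδdvd : (PowerSeries.X : PowerSeries K) ^ r ∣ δ :=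
      PowerSeries.X_pow_dvd_iff.mpr hδlow
    have hδr : PowerSeries.coeff r δ = PowerSeries.coeff r α := by
      rw [hδ, map_sub, hα', PowerSeries.coeff_mk, if_neg (lt_irrefl r), sub_zero]
    obtain ⟨c, hc⟩ := binom_aux α' δ n
    rw [show α' + δ = α by rw [hδ]; ring] at hc
    have hcoeff := congrArg (PowerSeries.coeff r) hc
    have h1 : PowerSeries.coeff r (α ^ (n + 1)) = 0 := by
      by_contra hne
      exact hrS (h r hne)
    have h2 : PowerSeries.coeff r (α' ^ (n + 1)) = 0 := by
      by_contra hne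
      exact hrS (onS_pow S hα'S (n + 1) r hne)
    have h3 : PowerSeries.coeff r (δ ^ 2 * c) = 0 := by
      obtain ⟨e, he⟩ := hδdvd
      have hrw : δ ^ 2 * c = PowerSeries.X ^ (2 * r) * (e ^ 2 * c) := by
        rw [he]; ring
      rw [hrw, PowerSeries.coeff_X_pow_mul', if_neg (by omega : ¬ 2 * r ≤ r)]
    have h4 : PowerSeries.coeff r (α' ^ n * δ) =
        (PowerSeries.constantCoeff α) ^ n * PowerSeries.coeff r α := by
      rw [PowerSeries.coeff_mul, Finset.sum_eq_single (0, r)]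
      · rw [hδr, PowerSeries.coeff_zero_eq_constantCoeff, map_pow]
        have : PowerSeries.constantCoeff α' = PowerSeries.constantCoeff α := by
          rw [hα', PowerSeries.constantCoeff_mk, if_pos hpos,
            ← PowerSeries.coeff_zero_eq_constantCoeff]
        rw [this]
      · rintro ⟨i, j⟩ hij hne
        rw [Finset.HasAntidiagonal.mem_antidiagonal] at hij
        have hj : j < r := by
          rcases Nat.lt_or_ge j r with hlt | hge
          · exact hlt
          · exfalso
            have hj' : j = r := by omega
            have hi' : i = 0 := by omega
            exact hne (by rw [hi', hj'])
        rw [hδlow j hj, mul_zero]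
      · intro hmem
        exact absurd (Finset.HasAntidiagonal.mem_antidiagonal.mpr (by simp)) hmem
    rw [h1, map_add, map_add, h2, h3, add_zero, zero_add, map_nsmul, h4] at hcoeff
    have hzero : ((n + 1 : ℕ) : K) *
        ((PowerSeries.constantCoeff α) ^ n * PowerSeries.coeff r α) = 0 := by
      rw [← nsmul_eq_mul, hcoeff]
    rw [← mul_assoc] at hzero
    exact (mul_ne_zero (mul_ne_zero (Nat.cast_ne_zero.mpr (Nat.succ_ne_zero n))
      (pow_ne_zero n h0)) hr) hzero

end Aux

private lemma single_one_pow {K : Type*} [Field K] (n : ℕ) :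
    (HahnSeries.single (1 : ℤ) (1 : K)) ^ n = HahnSeries.single (n : ℤ) 1 := by
  induction n with
  | zero => simp
  | succ k ih =>
    rw [pow_succ, ih, HahnSeries.single_mul_single, mul_one]
    push_cast
    ring_nf

private lemma ofPS_X_mul_pow {K : Type*} [Field K] (α : PowerSeries K) (n : ℕ) :
    (HahnSeries.ofPowerSeries ℤ K (PowerSeries.X * α)) ^ n =
      HahnSeries.single (n : ℤ) (1 : K) *
        HahnSeries.ofPowerSeries ℤ K (α ^ n) := by
  rw [← map_pow, mul_pow, map_mul, map_pow, map_pow, HahnSeries.ofPowerSeries_X,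
    single_one_pow]

/-- Let `m` be a nonzero integer and `α, γ ∈ K[[t]]` with `α(0) ≠ 0`
satisfy `(t·α(t))^m = t^m·γ(t)` as formal Laurent series.  Then for an additive
submonoid `S ⊆ ℕ`, `α` is supported on `S` if and only if `γ` is supported on `S`. -/
theorem zpow_support_iff {K : Type*} [Field K] [CharZero K]
    (S : AddSubmonoid ℕ) (m : ℤ) (hm : m ≠ 0)
    (α γ : PowerSeries K) (h0 : PowerSeries.constantCoeff α ≠ 0)
    (heq : (HahnSeries.ofPowerSeries ℤ K (PowerSeries.X * α) : LaurentSeries K) ^ m =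
      HahnSeries.single m (1 : K) * HahnSeries.ofPowerSeries ℤ K γ) :
    (∀ r : ℕ, PowerSeries.coeff r α ≠ 0 → r ∈ S) ↔
      (∀ r : ℕ, PowerSeries.coeff r γ ≠ 0 → r ∈ S) := by
  have hXα : (PowerSeries.X * α : PowerSeries K) ≠ 0 := by
    intro h
    apply h0
    have := congrArg (PowerSeries.coeff 1) h
    rwa [PowerSeries.coeff_succ_X_mul, map_zero,
      PowerSeries.coeff_zero_eq_constantCoeff] at this
  have hA : (HahnSeries.ofPowerSeries ℤ K (PowerSeries.X * α) : LaurentSeries K) ≠ 0 := by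
    intro h
    exact hXα (HahnSeries.ofPowerSeries_injective (by rw [h, map_zero]))
  rcases m with k | k
  · -- m = k ≥ 0, nonzero so k = n+1
    obtain ⟨n, rfl⟩ : ∃ n : ℕ, k = n + 1 := by
      rcases k with _ | n
      · exact absurd rfl hm
      · exact ⟨n, rfl⟩
    rw [Int.ofNat_eq_coe, zpow_natCast, ofPS_X_mul_pow] at heq
    have hγ : γ = α ^ (n + 1) := by
      apply HahnSeries.ofPowerSeries_injective (Γ := ℤ)
      have hs : (HahnSeries.single ((n + 1 : ℕ) : ℤ) (1 : K) : LaurentSeries K) ≠ 0 :=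
        HahnSeries.single_ne_zero one_ne_zero
      exact (mul_left_cancel₀ hs heq.symm)
    rw [hγ]
    constructor
    · exact fun hα => onS_pow S hα (n + 1)
    · exact fun hγ' => onS_root S h0 n hγ'
  · -- m = -(k+1)
    rw [Int.negSucc_eq, show ((k:ℤ)+1) = ((k+1:ℕ):ℤ) by push_cast; ring,
      zpow_neg, zpow_natCast, ofPS_X_mul_pow] at heq
    have hmul : α ^ (k + 1) * γ = 1 := by
      apply HahnSeries.ofPowerSeries_injective (Γ := ℤ)
      have hne : (HahnSeries.single ((k + 1 : ℕ) : ℤ) (1 : K) : LaurentSeries K) *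
          HahnSeries.ofPowerSeries ℤ K (α ^ (k + 1)) ≠ 0 := by
        rw [← ofPS_X_mul_pow]
        exact pow_ne_zero _ hA
      have := congrArg
        (fun x => (HahnSeries.single ((k + 1 : ℕ) : ℤ) (1 : K) *
          HahnSeries.ofPowerSeries ℤ K (α ^ (k + 1))) * x) heq
      simp only [mul_inv_cancel₀ hne] at this
      rw [map_mul, map_one]
      have hss : (HahnSeries.single ((k + 1 : ℕ) : ℤ) (1 : K) : LaurentSeries K) *
          HahnSeries.single (-((k + 1 : ℕ) : ℤ)) (1 : K) = 1 := by
        rw [HahnSeries.single_mul_single, add_neg_cancel, mul_one]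
        simp
      calc HahnSeries.ofPowerSeries ℤ K (α ^ (k + 1)) * HahnSeries.ofPowerSeries ℤ K γ
          = (HahnSeries.single ((k + 1 : ℕ) : ℤ) (1 : K) *
              HahnSeries.single (-((k + 1 : ℕ) : ℤ)) (1 : K)) *
              (HahnSeries.ofPowerSeries ℤ K (α ^ (k + 1)) *
                HahnSeries.ofPowerSeries ℤ K γ) := by rw [hss, one_mul]
        _ = HahnSeries.single ((k + 1 : ℕ) : ℤ) (1 : K) *
              HahnSeries.ofPowerSeries ℤ K (α ^ (k + 1)) *
              (HahnSeries.single (-((k + 1 : ℕ) : ℤ)) (1 : K) *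
                HahnSeries.ofPowerSeries ℤ K γ) := by ring
        _ = 1 := this.symm
    have hγ0 : PowerSeries.constantCoeff γ ≠ 0 := by
      intro hc
      have := congrArg (PowerSeries.constantCoeff) hmul
      simp [hc] at this
    constructor
    · intro hα
      exact onS_of_mul_eq_one S hmul (onS_pow S hα (k + 1))
    · intro hγ'
      refine onS_root S h0 k (onS_of_mul_eq_one S ?_ hγ')
      rw [mul_comm]; exact hmul
end

section
/- Let α ∈ K[[t]] with α(0) ≠ 0, and let β ∈ K[[t]] be such that the substitution t = u·β(u) solves the equation u = t·α(t) (i.e., u = u·β(u)·α(u·β(u))). Then for an additive semigroup S ⊆ ℤ≥0 containing 0, α is supported on S if and only if β is supported on S. -/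
/-- `Composed S Y Z` says that `Z = Y ∘ S` (substitution of the power series `S`,
assumed to have zero constant term, into `Y`), expressed coefficientwise. -/
def Composed {K : Type*} [Field K] (S Y Z : PowerSeries K) : Prop :=
  ∀ n : ℕ, PowerSeries.coeff n Z =
    ∑ k ∈ Finset.range (n + 1), PowerSeries.coeff k Y * PowerSeries.coeff n (S ^ k)

open PowerSeries Finset in
/-- If all coefficients of `β` up to `j` with nonzero value have index in `S`,
then a nonzero coefficient of `β ^ k` at `j` forces `j ∈ S`. -/
lemma pow_coeff_mem_aux {K : Type*} [Field K] (S : AddSubmonoid ℕ) (β : PowerSeries K) :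
    ∀ k j : ℕ, (∀ i ≤ j, PowerSeries.coeff i β ≠ 0 → i ∈ S) →
      PowerSeries.coeff j (β ^ k) ≠ 0 → j ∈ S := by
  intro k
  induction k with
  | zero =>
    intro j _ hne
    rw [pow_zero, PowerSeries.coeff_one] at hne
    have : j = 0 := by by_contra h; simp [h] at hne
    simpa [this] using S.zero_mem
  | succ k ih =>
    intro j hsupp hne
    rw [pow_succ, PowerSeries.coeff_mul] at hne
    obtain ⟨⟨a, b⟩, hab, hterm⟩ := Finset.exists_ne_zero_of_sum_ne_zero hne
    rw [Finset.HasAntidiagonal.mem_antidiagonal] at hab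
    have ha : PowerSeries.coeff a (β ^ k) ≠ 0 := fun h => hterm (by simp [h])
    have hb : PowerSeries.coeff b β ≠ 0 := fun h => hterm (by simp [h])
    have haS : a ∈ S := ih a (fun i hi => hsupp i (hi.trans (by omega))) ha
    have hbS : b ∈ S := hsupp b (by omega) hb
    exact hab ▸ S.add_mem haS hbS

/-- Let `α ∈ K[[t]]` with `α(0) ≠ 0` and let `β ∈ K[[t]]` be such that
the substitution `t = u·β(u)` solves `u = t·α(t)`, i.e. `(t·α(t)) ∘ (u·β(u)) = u`.
Then for an additive submonoid `S ⊆ ℕ`, `α` is supported on `S` iff `β` is supported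
on `S`. -/
theorem compositional_inverse_support_iff {K : Type*} [Field K] [CharZero K]
    (S : AddSubmonoid ℕ) (α β : PowerSeries K)
    (h0 : PowerSeries.constantCoeff α ≠ 0)
    (hβ : Composed (PowerSeries.X * β) (PowerSeries.X * α) PowerSeries.X) :
    (∀ r : ℕ, PowerSeries.coeff r α ≠ 0 → r ∈ S) ↔
      (∀ r : ℕ, PowerSeries.coeff r β ≠ 0 → r ∈ S) := by
  -- clean form of the relation
  have rel : ∀ n : ℕ, PowerSeries.coeff (n + 1) (PowerSeries.X : PowerSeries K) =
      ∑ k ∈ Finset.range (n + 1),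
        PowerSeries.coeff k α * PowerSeries.coeff (n - k) (β ^ (k + 1)) := by
    intro n
    have h := hβ (n + 1)
    rw [Finset.sum_range_succ'] at h
    simp only [pow_zero, PowerSeries.coeff_one] at h
    rw [h]
    have h00 : PowerSeries.coeff 0 (PowerSeries.X * α) = 0 := by
      simp [PowerSeries.coeff_zero_eq_constantCoeff]
    rw [h00, zero_mul, add_zero]
    apply Finset.sum_congr rfl
    intro k hk
    rw [Finset.mem_range] at hk
    have hk' : k ≤ n := Nat.lt_succ_iff.mp hk
    rw [PowerSeries.coeff_succ_X_mul, mul_pow, PowerSeries.coeff_X_pow_mul']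
    rw [if_pos (by omega), Nat.succ_sub_succ]
  -- β₀ ≠ 0
  have rel0 := rel 0
  norm_num [Finset.sum_range_one, PowerSeries.coeff_one_X] at rel0
  have hβ0 : PowerSeries.coeff 0 β ≠ 0 := by
    intro h
    rw [PowerSeries.coeff_zero_eq_constantCoeff_apply] at h
    rw [h, mul_zero] at rel0
    exact one_ne_zero rel0
  constructor
  · -- α supported → β supported
    intro hα
    intro r
    induction r using Nat.strong_induction_on with
    | _ r ih =>
      intro hr
      rcases Nat.eq_zero_or_pos r with h | hpos
      · simpa [h] using S.zero_mem
      · -- use rel at n = r ≥ 1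
        have hrel := rel r
        rw [PowerSeries.coeff_X, if_neg (by omega)] at hrel
        rw [Finset.sum_range_succ'] at hrel
        simp only [Nat.sub_zero, zero_add, pow_one] at hrel
        -- 0 = Σ_{k<r} α_{k+1} β^{k+2}_{r-(k+1)} + α_0 β_r
        have hterm : PowerSeries.coeff 0 α * PowerSeries.coeff r β ≠ 0 :=
          mul_ne_zero (by rwa [PowerSeries.coeff_zero_eq_constantCoeff]) hr
        have hsum : ∑ k ∈ Finset.range r, PowerSeries.coeff (k + 1) α *
            PowerSeries.coeff (r - (k + 1)) (β ^ (k + 1 + 1)) ≠ 0 := by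
          intro h
          rw [h, zero_add] at hrel
          exact hterm hrel.symm
        obtain ⟨k, hkmem, hk⟩ := Finset.exists_ne_zero_of_sum_ne_zero hsum
        rw [Finset.mem_range] at hkmem
        have ha : PowerSeries.coeff (k + 1) α ≠ 0 := fun h => hk (by simp [h])
        have hb : PowerSeries.coeff (r - (k + 1)) (β ^ (k + 1 + 1)) ≠ 0 :=
          fun h => hk (by simp [h])
        have h1 : (k + 1) ∈ S := hα _ ha
        have h2 : (r - (k + 1)) ∈ S := by
          apply pow_coeff_mem_aux S β (k + 1 + 1) _ _ hb
          intro i hi hne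
          exact ih i (by omega) hne
        have : r = (k + 1) + (r - (k + 1)) := by omega
        rw [this]; exact S.add_mem h1 h2
  · -- β supported → α supported
    intro hβs
    intro r
    induction r using Nat.strong_induction_on with
    | _ r ih =>
      intro hr
      rcases Nat.eq_zero_or_pos r with h | hpos
      · simpa [h] using S.zero_mem
      · have hrel := rel r
        rw [PowerSeries.coeff_X, if_neg (by omega)] at hrel
        rw [Finset.sum_range_succ] at hrel
        -- last term: α_r β^{r+1}_0 = α_r β_0^{r+1}
        have hlast : PowerSeries.coeff r α *
            PowerSeries.coeff (r - r) (β ^ (r + 1)) ≠ 0 := by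
          apply mul_ne_zero hr
          rw [Nat.sub_self, PowerSeries.coeff_zero_eq_constantCoeff, map_pow]
          exact pow_ne_zero _ (by rwa [← PowerSeries.coeff_zero_eq_constantCoeff_apply] )
        have hsum : ∑ k ∈ Finset.range r, PowerSeries.coeff k α *
            PowerSeries.coeff (r - k) (β ^ (k + 1)) ≠ 0 := by
          intro h
          rw [h, zero_add] at hrel
          exact hlast hrel.symm
        obtain ⟨k, hkmem, hk⟩ := Finset.exists_ne_zero_of_sum_ne_zero hsum
        rw [Finset.mem_range] at hkmem
        have ha : PowerSeries.coeff k α ≠ 0 := fun h => hk (by simp [h])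
        have hb : PowerSeries.coeff (r - k) (β ^ (k + 1)) ≠ 0 :=
          fun h => hk (by simp [h])
        have h1 : k ∈ S := ih k hkmem ha
        have h2 : (r - k) ∈ S := by
          apply pow_coeff_mem_aux S β (k + 1) _ _ hb
          intro i _ hne
          exact hβs i hne
        have : r = k + (r - k) := by omega
        rw [this]; exact S.add_mem h1 h2
end

section
/- Let f ∈ K((x^{1/q})) have order -p/q with p, q positive coprime integers or more generally with the image of f in R_q^o, and suppose p ≥ q. If E_{f,q} has dual Puiseux characteristic (q, p; β₁, …, β_g), then the associated plane curve germ C_{f,q}(x,y) = ∏_{k=1}^q (y - 1/f(ζ_q^k x^{1/q})) has Puiseux characteristic (q; 2p - β₁, …, 2p - β_g). -/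
/-- The conjugate `F(c·t)` of a formal Laurent series `F(t)`:
the `n`-th coefficient is multiplied by `c^n` (with `zpow` in the field `K`). -/
noncomputable def LaurentSeries.conjRoot {K : Type*} [Field K] (c : K) (F : LaurentSeries K) :
    LaurentSeries K where
  coeff n := c ^ n * F.coeff n
  isPWO_support' := F.isPWO_support.mono (fun n hn => by
    simp only [Function.mem_support] at hn ⊢
    exact fun h => hn (by simp [h]))

/-- The ring homomorphism `K[[x]] → K((t))` sending `x` to `t^N` (for `N > 0`). -/
noncomputable def xpowHom (K : Type*) [Field K] (N : ℕ) (hN : 0 < N) :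
    PowerSeries K →+* LaurentSeries K :=
  (HahnSeries.embDomainRingHom (AddMonoidHom.mk' (fun n : ℤ => (N : ℤ) * n) (by intro a b; ring))
    (fun a b h => mul_left_cancel₀ (show (N : ℤ) ≠ 0 by exact_mod_cast hN.ne') h)
    (fun g g' => mul_le_mul_iff_right₀ (show (0 : ℤ) < (N : ℤ) by exact_mod_cast hN))).comp
    (HahnSeries.ofPowerSeries ℤ K)

/-- `DualChar q supp g β e` : the Laurent series (in `t = x^{1/q}`) with support `supp ⊆ ℤ`
has dual Puiseux characteristic `(q, -; β 1, …, β g)` with gcd sequence `e 0 = q, …, e g = 1`: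
for each `k < g`, `-β (k+1)` is the least exponent in the support not divisible by `e k`,
and `e (k+1) = gcd (e k) (β (k+1))`. -/
def DualChar (q : ℕ) (supp : ℤ → Prop) (g : ℕ) (β : ℕ → ℕ) (e : ℕ → ℕ) : Prop :=
  e 0 = q ∧ e g = 1 ∧ ∀ k < g,
    supp (-(β (k + 1) : ℤ)) ∧ ¬ ((e k : ℤ) ∣ (β (k + 1) : ℤ)) ∧
    (∀ i : ℤ, supp i → ¬ ((e k : ℤ) ∣ i) → -(β (k + 1) : ℤ) ≤ i) ∧
    e (k + 1) = Nat.gcd (e k) (β (k + 1))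

/-- `PCharZ m supp g β e` : the Puiseux characteristic `(m; β 1, …, β g)` of a
parametrization `x = t^m`, `y = ∑ c_i t^i` with support `supp ⊆ ℤ`:
for each `k < g`, `β (k+1)` is the least exponent in the support not divisible by
`e k`, with gcd sequence `e 0 = m`, `e (k+1) = gcd (e k) (β (k+1))`, `e g = 1`. -/
def PCharZ (m : ℕ) (supp : ℤ → Prop) (g : ℕ) (β : ℕ → ℕ) (e : ℕ → ℕ) : Prop :=
  e 0 = m ∧ e g = 1 ∧ ∀ k < g,
    supp (β (k + 1) : ℤ) ∧ ¬ ((e k : ℤ) ∣ (β (k + 1) : ℤ)) ∧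
    (∀ i : ℤ, supp i → ¬ ((e k : ℤ) ∣ i) → (β (k + 1) : ℤ) ≤ i) ∧
    e (k + 1) = Nat.gcd (e k) (β (k + 1))

/-- `PCharN` : as `PCharZ`, for supports indexed by `ℕ` (power series parametrizations). -/
def PCharN (m : ℕ) (supp : ℕ → Prop) (g : ℕ) (β : ℕ → ℕ) (e : ℕ → ℕ) : Prop :=
  e 0 = m ∧ e g = 1 ∧ ∀ k < g,
    supp (β (k + 1)) ∧ ¬ (e k ∣ β (k + 1)) ∧
    (∀ i : ℕ, supp i → ¬ (e k ∣ i) → β (k + 1) ≤ i) ∧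
    e (k + 1) = Nat.gcd (e k) (β (k + 1))

/-- `RamIrred q N F` : the element `f ∈ K((x^{1/q}))`, expanded as the Laurent series `F`
in the variable `u = x^{1/N}` (where `q ∣ N`), has irreducible associated connection
`E_{f,q}`, i.e. its image in `R_q` cannot be represented by an element of `K((x^{1/d}))`
for any proper divisor `d` of `q`. -/
def RamIrred {K : Type*} [Field K] (q N : ℕ) (F : LaurentSeries K) : Prop :=
  ∀ d : ℕ, d ∣ q → d < q → ¬ (∀ n : ℤ, n < 0 → F.coeff n ≠ 0 → ((N / d : ℕ) : ℤ) ∣ n)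

/-- Auxiliary gcd fact: if `m ∣ A` and `b ≤ A` then `gcd m (A - b) = gcd m b`. -/
lemma gcd_sub_of_dvd (m A b : ℕ) (h : m ∣ A) (hb : b ≤ A) :
    Nat.gcd m (A - b) = Nat.gcd m b := by
  apply Nat.dvd_antisymm
  · exact Nat.dvd_gcd (Nat.gcd_dvd_left _ _)
      (by
        have h1 : Nat.gcd m (A - b) ∣ A := (Nat.gcd_dvd_left _ _).trans h
        have h2 : Nat.gcd m (A - b) ∣ A - (A - b) :=
          Nat.dvd_sub h1 (Nat.gcd_dvd_right _ _)
        rwa [Nat.sub_sub_self hb] at h2)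
  · exact Nat.dvd_gcd (Nat.gcd_dvd_left _ _)
      (Nat.dvd_sub ((Nat.gcd_dvd_left _ _).trans h) (Nat.gcd_dvd_right _ _))

/-- The key analytic lemma: if `F` has order `-p` with least non-`m`-divisible exponent
`-b` (with `m ∣ p`), then `G = F⁻¹` has all non-`m`-divisible exponents `≥ 2p - b`, and
its coefficient at `2p - b` is nonzero. -/
lemma inv_supp_key {K : Type*} [Field K] (p : ℤ) (F G : LaurentSeries K)
    (hFG : F * G = 1)
    (hFlow : ∀ n : ℤ, n < -p → F.coeff n = 0)
    (hFlead : F.coeff (-p) ≠ 0)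
    (claimA : ∀ i : ℤ, G.coeff i ≠ 0 → p ≤ i)
    (hGp : G.coeff p ≠ 0)
    (m b : ℤ) (hmp : m ∣ p) (hmb : ¬ m ∣ b)
    (hbF : F.coeff (-b) ≠ 0)
    (hmin : ∀ i : ℤ, F.coeff i ≠ 0 → ¬ m ∣ i → -b ≤ i) :
    (∀ i : ℤ, ¬ m ∣ i → i < 2 * p - b → G.coeff i = 0) ∧ G.coeff (2 * p - b) ≠ 0 := by
  have hble : b ≤ p := by
    by_contra h
    exact hbF (hFlow _ (by omega))
  have hblt : b < p := by
    rcases eq_or_lt_of_le hble with h | h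
    · exact absurd (h ▸ hmp) hmb
    · exact h
  -- Claim B, by strong induction on (i - p).toNat
  have B : ∀ N : ℕ, ∀ c : ℤ, (c - p).toNat < N → ¬ m ∣ c → c < 2 * p - b →
      G.coeff c = 0 := by
    intro N
    induction N with
    | zero => intro c hc; omega
    | succ N IH =>
      intro c hc hmc hcb
      by_cases hcp : c ≤ p
      · by_contra hGc
        have h1 := claimA c hGc
        have h2 : c = p := le_antisymm hcp h1
        exact hmc (h2 ▸ hmp)
      · push_neg at hcp
        by_contra hGc
        have hmem : ((-p, c) : ℤ × ℤ) ∈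
            Finset.antidiagonal F.isPWO_support G.isPWO_support (c - p) := by
          rw [Finset.mem_addAntidiagonal]
          exact ⟨(F.mem_support _).2 hFlead, (G.mem_support _).2 hGc, by ring⟩
        have hsum : (F * G).coeff (c - p) = F.coeff (-p) * G.coeff c := by
          rw [HahnSeries.coeff_mul]
          apply Finset.sum_eq_single_of_mem _ hmem
          intro ij hij hne
          rw [Finset.mem_addAntidiagonal] at hij
          obtain ⟨hi, hj, hs⟩ := hij
          rw [F.mem_support] at hi
          rw [G.mem_support] at hj
          have hjp : p ≤ ij.2 := claimA _ hj
          have hilt : ij.1 < -b := by omega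
          have hmi : m ∣ ij.1 := by
            by_contra hmi
            exact absurd (hmin _ hi hmi) (not_le.2 hilt)
          have hmj : ¬ m ∣ ij.2 := by
            intro hd
            apply hmc
            have hc' : c = ij.2 + (ij.1 + p) := by omega
            rw [hc']
            exact dvd_add hd (dvd_add hmi hmp)
          have hjlt : ij.2 < c := by
            have hilb : -p ≤ ij.1 := by
              by_contra h
              exact hi (hFlow _ (by omega))
            rcases eq_or_lt_of_le hilb with h | h
            · exact absurd (Prod.ext h.symm (by omega)) hne
            · omega
          exact absurd (IH ij.2 (by omega) hmj (by omega)) hj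
        rw [hFG, HahnSeries.coeff_one, if_neg (by
          intro h
          have hcp' : c = p := by omega
          exact hmc (hcp' ▸ hmp))] at hsum
        exact hGc (by
          rcases mul_eq_zero.1 hsum.symm with h | h
          · exact absurd h hFlead
          · exact h)
  have B' : ∀ i : ℤ, ¬ m ∣ i → i < 2 * p - b → G.coeff i = 0 := fun i =>
    B ((i - p).toNat + 1) i (Nat.lt_succ_self _)
  refine ⟨B', ?_⟩
  intro hD
  have hmem : ((-b, p) : ℤ × ℤ) ∈
      Finset.antidiagonal F.isPWO_support G.isPWO_support (p - b) := by
    rw [Finset.mem_addAntidiagonal]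
    exact ⟨(F.mem_support _).2 hbF, (G.mem_support _).2 hGp, by ring⟩
  have hsum : (F * G).coeff (p - b) = F.coeff (-b) * G.coeff p := by
    rw [HahnSeries.coeff_mul]
    apply Finset.sum_eq_single_of_mem _ hmem
    intro ij hij hne
    rw [Finset.mem_addAntidiagonal] at hij
    obtain ⟨hi, hj, hs⟩ := hij
    rw [F.mem_support] at hi
    rw [G.mem_support] at hj
    have hjp : p ≤ ij.2 := claimA _ hj
    have hilb : -p ≤ ij.1 := by
      by_contra h
      exact hi (hFlow _ (by omega))
    have hile : ij.1 ≤ -b := by omega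
    rcases eq_or_lt_of_le hile with h | h
    · exact absurd (Prod.ext h (by omega)) hne
    · have hmi : m ∣ ij.1 := by
        by_contra hmi
        exact absurd (hmin _ hi hmi) (not_le.2 h)
      have hmj : ¬ m ∣ ij.2 := by
        intro hd
        apply hmb
        have hb' : b = p - (ij.1 + ij.2) := by omega
        rw [hb']
        exact dvd_sub hmp (dvd_add hmi hd)
      have hj2 : ¬ ij.2 < 2 * p - b := fun hlt => hj (B' _ hmj hlt)
      have : ij.2 = 2 * p - b := by omega
      exact absurd (this ▸ hD) hj
  rw [hFG, HahnSeries.coeff_one, if_neg (by omega)] at hsum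
  rcases mul_eq_zero.1 hsum.symm with h | h
  · exact hbF h
  · exact hGp h

/-- Let `f ∈ K((x^{1/q}))` have order `-p/q` with `p ≥ q > 0`, define an
irreducible connection `E_{f,q}`, and have dual Puiseux characteristic
`(q, p; β 1, …, β g)`.  Here `F` is the expansion of `f` in the variable `t = x^{1/q}`.
Then the associated plane curve germ `C_{f,q}`, with good parametrization `x = t^q`,
`y = 1/f = F⁻¹`, has Puiseux characteristic `(q; 2p - β 1, …, 2p - β g)`. -/
theorem dualPuiseux_to_puiseux_of_le {K : Type*} [Field K] [CharZero K] [IsAlgClosed K]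
    (q p : ℕ) (hq : 0 < q) (hp : 0 < p) (hqp : q ≤ p)
    (F : LaurentSeries K)
    (hFlow : ∀ n : ℤ, n < -(p : ℤ) → F.coeff n = 0)
    (hFlead : F.coeff (-(p : ℤ)) ≠ 0)
    (hirr : RamIrred q q F)
    (g : ℕ) (β e : ℕ → ℕ)
    (hchar : DualChar q (fun n => F.coeff n ≠ 0) g β e) :
    ∃ e' : ℕ → ℕ,
      PCharZ q (fun i => (F⁻¹).coeff i ≠ 0) g (fun k => 2 * p - β k) e' := by
  obtain ⟨he0, heg, hk⟩ := hchar
  have hF0 : F ≠ 0 := fun h => hFlead (by simp [h])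
  set G := F⁻¹ with hGdef
  have hFG : F * G = 1 := mul_inv_cancel₀ hF0
  have hG0 : G ≠ 0 := inv_ne_zero hF0
  have hordF : F.order = -(p : ℤ) := by
    apply le_antisymm (HahnSeries.order_le_of_coeff_ne_zero hFlead)
    by_contra h
    push_neg at h
    exact HahnSeries.coeff_order_eq_zero.not.2 hF0 (hFlow _ h)
  have hordG : G.order = (p : ℤ) := by
    have h := HahnSeries.order_mul hF0 hG0
    rw [hFG, HahnSeries.order_one, hordF] at h
    omega
  have claimA : ∀ i : ℤ, G.coeff i ≠ 0 → (p : ℤ) ≤ i := fun i hi =>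
    hordG ▸ HahnSeries.order_le_of_coeff_ne_zero hi
  have claimC : F.coeff (-(p : ℤ)) * G.coeff (p : ℤ) = 1 := by
    have h := HahnSeries.coeff_mul_order_add_order F G
    rw [hFG, HahnSeries.leadingCoeff_eq, HahnSeries.leadingCoeff_eq, hordF, hordG] at h
    simpa using h.symm
  have hGp : G.coeff (p : ℤ) ≠ 0 := by
    intro h
    rw [h, mul_zero] at claimC
    exact zero_ne_one claimC
  refine ⟨e, he0, heg, ?_⟩
  intro k hkg
  obtain ⟨hsuppb, hndvd, hmin, hgcd⟩ := hk k hkg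
  have hble : β (k + 1) ≤ p := by
    by_contra h
    push_neg at h
    exact hsuppb (hFlow _ (by exact_mod_cast neg_lt_neg (by exact_mod_cast h)))
  have hcast : ((2 * p - β (k + 1) : ℕ) : ℤ) = 2 * (p : ℤ) - (β (k + 1) : ℤ) := by
    have : β (k + 1) ≤ 2 * p := by omega
    push_cast [Nat.cast_sub this]
    ring
  by_cases hmp : (e k : ℤ) ∣ (p : ℤ)
  · -- main case: e k divides p
    obtain ⟨B', D⟩ := inv_supp_key (p : ℤ) F G hFG hFlow hFlead claimA hGp
      (e k : ℤ) (β (k + 1) : ℤ) hmp hndvd hsuppb hmin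
    refine ⟨?_, ?_, ?_, ?_⟩
    · rw [hcast]; exact D
    · rw [hcast]
      intro hd
      apply hndvd
      have h2p : (e k : ℤ) ∣ 2 * (p : ℤ) := Dvd.dvd.mul_left hmp 2
      have : (β (k + 1) : ℤ) = 2 * (p : ℤ) - (2 * (p : ℤ) - (β (k + 1) : ℤ)) := by ring
      rw [this]
      exact dvd_sub h2p hd
    · intro i hi hmi
      rw [hcast]
      by_contra h
      exact hi (B' i hmi (by omega))
    · rw [hgcd]
      have hmp' : e k ∣ 2 * p := by
        have : e k ∣ p := Int.natCast_dvd_natCast.mp hmp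
        exact this.mul_left 2
      exact (gcd_sub_of_dvd (e k) (2 * p) (β (k + 1)) hmp' (by omega)).symm
  · -- degenerate case: e k does not divide p, forcing β (k+1) = p
    have hbp : β (k + 1) = p := by
      have h1 : -(β (k + 1) : ℤ) ≤ -(p : ℤ) :=
        hmin (-(p : ℤ)) hFlead (by rwa [dvd_neg])
      have h2 : (p : ℤ) ≤ (β (k + 1) : ℤ) := by omega
      omega
    have h2pb : 2 * p - β (k + 1) = p := by omega
    simp only [h2pb]
    refine ⟨hGp, by rwa [hbp] at hndvd, fun i hi _ => claimA i hi, ?_⟩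
    rw [hgcd, hbp]
end

section
/- Let E_{f,q} be an irreducible connection with dual Puiseux characteristic (q, p; β₁, …, β_g) and associated gcd sequence e₀ = q, e_k = gcd(e_{k-1}, β_k). Then Irr(End_{K((x))}(E_{f,q})) = ∑_{i=1}^{g} (e_{i-1} - e_i)·β_i. -/
lemma conjRoot_coeff {K : Type*} [Field K] (c : K) (F : LaurentSeries K) (n : ℤ) :
    (LaurentSeries.conjRoot c F).coeff n = c ^ n * F.coeff n := rfl

lemma diff_coeff {K : Type*} [Field K] {q : ℕ} {ζ : K} (hζ : IsPrimitiveRoot ζ q)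
    (hq : 0 < q) (F : LaurentSeries K) (i j : ℕ) (n : ℤ) :
    (LaurentSeries.conjRoot (ζ ^ (i + 1)) F - LaurentSeries.conjRoot (ζ ^ (j + 1)) F).coeff n ≠ 0
      ↔ (F.coeff n ≠ 0 ∧ ¬ ((q:ℤ) ∣ ((i:ℤ) - (j:ℤ)) * n)) := by
  have hz : ζ ≠ 0 := by
    intro h
    have := hζ.pow_eq_one
    rw [h, zero_pow hq.ne'] at this
    exact zero_ne_one this
  have h1 : (LaurentSeries.conjRoot (ζ ^ (i + 1)) F
      - LaurentSeries.conjRoot (ζ ^ (j + 1)) F).coeff n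
      = ((ζ ^ (i + 1) : K) ^ n - (ζ ^ (j + 1) : K) ^ n) * F.coeff n := by
    rw [HahnSeries.coeff_sub, conjRoot_coeff, conjRoot_coeff, sub_mul]
  have hpow : ∀ m : ℕ, (ζ ^ m : K) ^ n = ζ ^ ((m : ℤ) * n) := by
    intro m
    rw [← zpow_natCast ζ m, ← zpow_mul]
  have hdiff : (ζ ^ (i + 1) : K) ^ n - (ζ ^ (j + 1) : K) ^ n ≠ 0
      ↔ ¬ ((q:ℤ) ∣ ((i:ℤ) - (j:ℤ)) * n) := by
    rw [hpow, hpow, sub_ne_zero]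
    push_cast
    constructor
    · intro h hdvd
      apply h
      have : ζ ^ ((((i:ℤ)) - j) * n) = 1 := (hζ.zpow_eq_one_iff_dvd _).mpr hdvd
      have key : ζ ^ (((i:ℤ) + 1) * n) = ζ ^ (((i:ℤ) - j) * n) * ζ ^ (((j:ℤ) + 1) * n) := by
        rw [← zpow_add₀ hz]; congr 1; ring
      rw [key, this, one_mul]
    · intro h heq
      apply h
      rw [← hζ.zpow_eq_one_iff_dvd]
      have key : ζ ^ (((i:ℤ) + 1) * n) = ζ ^ (((i:ℤ) - j) * n) * ζ ^ (((j:ℤ) + 1) * n) := by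
        rw [← zpow_add₀ hz]; congr 1; ring
      rw [key] at heq
      have := mul_right_cancel₀ (zpow_ne_zero _ hz) (heq.trans (one_mul _).symm)
      exact this
  rw [h1, mul_ne_zero_iff, hdiff, and_comm]
open Finset

/-- Dividing `c * x` by `q` only depends on `x` mod `q`. -/
lemma dvd_mul_congr {q : ℕ} {x y : ℤ} (h : x ≡ y [ZMOD (q:ℤ)]) (c : ℤ) :
    ((q:ℤ) ∣ c * x) ↔ ((q:ℤ) ∣ c * y) := by
  rw [← Int.modEq_zero_iff_dvd, ← Int.modEq_zero_iff_dvd]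
  exact ⟨fun h2 => ((h.mul_left c).symm).trans h2, fun h2 => (h.mul_left c).trans h2⟩

lemma card_filter_dvd_range {q d : ℕ} (hq : 0 < q) (hd : d ∣ q) :
    ((Finset.range q).filter (fun m => d ∣ m)).card = q / d := by
  have hd0 : 0 < d := Nat.pos_of_dvd_of_pos hd hq
  obtain ⟨s, rfl⟩ := hd
  have himg : (Finset.range (d * s)).filter (fun m => d ∣ m)
      = (Finset.range s).image (fun t => d * t) := by
    ext m
    simp only [Finset.mem_filter, Finset.mem_range, Finset.mem_image]
    constructor
    · rintro ⟨hm, t, rfl⟩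
      exact ⟨t, (Nat.mul_lt_mul_left hd0).mp hm, rfl⟩
    · rintro ⟨t, ht, rfl⟩
      exact ⟨(Nat.mul_lt_mul_left hd0).mpr ht, Dvd.intro t rfl⟩
  rw [himg, Finset.card_image_of_injective _ fun a b hab => by
    exact Nat.eq_of_mul_eq_mul_left hd0 hab]
  rw [Finset.card_range, Nat.mul_div_cancel_left _ hd0]

lemma order_prod {K : Type*} [Field K] {ι : Type*} (s : Finset ι) (f : ι → LaurentSeries K)
    (hf : ∀ i ∈ s, f i ≠ 0) :
    (∏ i ∈ s, f i).order = ∑ i ∈ s, (f i).order := by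
  classical
  induction s using Finset.cons_induction with
  | empty => simp [HahnSeries.order_one]
  | cons a s ha ih =>
    rw [Finset.prod_cons, Finset.sum_cons,
      HahnSeries.order_mul (hf a (Finset.mem_cons_self a s))
        (Finset.prod_ne_zero_iff.2 fun i hi => hf i (Finset.mem_cons_of_mem hi)),
      ih fun i hi => hf i (Finset.mem_cons_of_mem hi)]

/-- Let `E_{f,q}` be an irreducible connection with dual Puiseux
characteristic `(q, p; β 1, …, β g)` and gcd sequence `e 0 = q`,
`e k = gcd (e (k-1)) (β k)`.  Then
`Irr(End(E_{f,q})) = ∑_{i=1}^{g} (e (i-1) - e i) · β i`, where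
`Irr(End(E_{f,q})) = -ord_x ∏_{i≠j} (f_i - f_j)` and `F` is the expansion of `f` in
`t = x^{1/q}`. -/
theorem irregularity_End_eq_sum {K : Type*} [Field K] [CharZero K] [IsAlgClosed K]
    (q p : ℕ) (hq : 0 < q) (hp : 0 < p)
    (ζ : K) (hζ : IsPrimitiveRoot ζ q)
    (F : LaurentSeries K)
    (hFlow : ∀ n : ℤ, n < -(p : ℤ) → F.coeff n = 0)
    (hFlead : F.coeff (-(p : ℤ)) ≠ 0)
    (hFirr : RamIrred q q F)
    (g : ℕ) (β e : ℕ → ℕ)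
    (hchar : DualChar q (fun n => F.coeff n ≠ 0) g β e) :
    (q : ℤ) * (∑ i ∈ Finset.range g, ((e i - e (i + 1) : ℕ) : ℤ) * (β (i + 1) : ℤ)) =
      - (∏ i ∈ Finset.range q, ∏ j ∈ (Finset.range q).erase i,
        (LaurentSeries.conjRoot (ζ ^ (i + 1)) F -
          LaurentSeries.conjRoot (ζ ^ (j + 1)) F)).order := by
  classical
  obtain ⟨he0, heg, hch⟩ := hchar
  set P : ℕ → ℕ → LaurentSeries K := fun i j =>
    LaurentSeries.conjRoot (ζ ^ (i + 1)) F - LaurentSeries.conjRoot (ζ ^ (j + 1)) F with hP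
  set cond : ℕ → ℕ → ℕ → Prop := fun k i j =>
    ((q:ℤ) ∣ (e k : ℤ) * ((i:ℤ) - (j:ℤ))) ∧ ¬ ((q:ℤ) ∣ (e (k+1) : ℤ) * ((i:ℤ) - (j:ℤ)))
    with hcond
  -- divisibility chain
  have hstep : ∀ k < g, e (k+1) ∣ e k := fun k hk =>
    (hch k hk).2.2.2 ▸ Nat.gcd_dvd_left _ _
  have hchain : ∀ b ≤ g, ∀ a ≤ b, e b ∣ e a := by
    intro b
    induction b with
    | zero => intro _ a ha; rw [Nat.le_zero.mp ha]
    | succ n ih =>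
      intro hbg a ha
      rcases Nat.eq_or_lt_of_le ha with rfl | h
      · exact dvd_rfl
      · exact (hstep n (by omega)).trans (ih (by omega) a (by omega))
  have hepos : ∀ k ≤ g, 0 < e k := by
    intro k
    induction k with
    | zero => intro _; rw [he0]; exact hq
    | succ n ih =>
      intro h
      rw [(hch n (by omega)).2.2.2]
      exact Nat.gcd_pos_of_pos_left _ (ih (by omega))
  -- existence and uniqueness of the level k for a pair (i, j)
  have hex : ∀ i < q, ∀ j < q, i ≠ j →
      ∃ k < g, cond k i j ∧ ∀ k' < g, k' ≠ k → ¬ cond k' i j := by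
    intro i hi j hj hij
    have hx0 : ¬ ((q:ℤ) ∣ ((i:ℤ) - (j:ℤ))) := by
      rintro ⟨c, hc⟩
      have h1 : c = 0 ∨ 1 ≤ c ∨ c ≤ -1 := by omega
      rcases h1 with rfl | h1 | h1
      · simp at hc; omega
      · nlinarith [hc, (by exact_mod_cast hi : (i:ℤ) < q), (by positivity : (0:ℤ) ≤ (j:ℤ))]
      · nlinarith [hc, (by exact_mod_cast hj : (j:ℤ) < q), (by positivity : (0:ℤ) ≤ (i:ℤ))]
    have hEx : ∃ k, ¬ ((q:ℤ) ∣ (e k : ℤ) * ((i:ℤ) - (j:ℤ))) := by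
      refine ⟨g, ?_⟩; rw [heg]; simpa using hx0
    set n := Nat.find hEx with hn
    have hspec := Nat.find_spec hEx
    have hnle : n ≤ g := Nat.find_le (by rw [heg]; simpa using hx0)
    rw [← hn] at hspec
    have hn0 : n ≠ 0 := by
      intro h
      apply hspec
      rw [h, he0]
      exact Dvd.intro _ rfl
    refine ⟨n - 1, by omega, ⟨?_, ?_⟩, ?_⟩
    · have := Nat.find_min hEx (show n - 1 < n by omega)
      simpa using this
    · have : n - 1 + 1 = n := by omega
      rw [this]; exact hspec
    · intro k' hk' hne
      rintro ⟨h1, h2⟩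
      rcases Nat.lt_or_ge k' (n-1) with h | h
      · exact h2 (by simpa using Nat.find_min hEx (show k' + 1 < n by omega))
      · have hk'n : n ≤ k' := by omega
        apply hspec
        refine h1.trans ?_
        exact mul_dvd_mul_right (Int.natCast_dvd_natCast.mpr (hchain k' (by omega) n hk'n)) _
  -- each factor's order
  have key : ∀ i < q, ∀ j < q, i ≠ j → ∀ k < g, cond k i j →
      P i j ≠ 0 ∧ (P i j).order = -(β (k+1) : ℤ) := by
    intro i hi j hj hij k hk ⟨hc1, hc2⟩
    obtain ⟨hsupp, hnd, hmin, hgcd⟩ := hch k hk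
    have hne : (P i j).coeff (-(β (k+1) : ℤ)) ≠ 0 := by
      simp only [hP]
      rw [diff_coeff hζ hq]
      refine ⟨hsupp, ?_⟩
      intro hdvd
      apply hc2
      have hdvd' : (q:ℤ) ∣ ((i:ℤ) - j) * (β (k+1) : ℤ) := by
        rcases hdvd with ⟨c, hc⟩
        exact ⟨-c, by linarith [hc]⟩
      have hbez : ((e (k+1) : ℤ)) = (e k : ℤ) * Nat.gcdA (e k) (β (k+1))
          + (β (k+1) : ℤ) * Nat.gcdB (e k) (β (k+1)) := by
        rw [hgcd]; exact_mod_cast Nat.gcd_eq_gcd_ab (e k) (β (k+1))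
      have : (e (k+1) : ℤ) * ((i:ℤ) - j)
          = Nat.gcdA (e k) (β (k+1)) * ((e k : ℤ) * ((i:ℤ) - j))
            + Nat.gcdB (e k) (β (k+1)) * (((i:ℤ) - j) * (β (k+1) : ℤ)) := by
        rw [hbez]; ring
      rw [this]
      exact dvd_add (Dvd.dvd.mul_left hc1 _) (Dvd.dvd.mul_left hdvd' _)
    have hvan : ∀ m : ℤ, m < -(β (k+1) : ℤ) → (P i j).coeff m = 0 := by
      intro m hm
      by_contra hco
      have hco' : (LaurentSeries.conjRoot (ζ ^ (i + 1)) F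
          - LaurentSeries.conjRoot (ζ ^ (j + 1)) F).coeff m ≠ 0 := hco
      rw [diff_coeff hζ hq] at hco'
      obtain ⟨hsup, hnd'⟩ := hco'
      have hek : (e k : ℤ) ∣ m := by
        by_contra hnotdvd
        exact absurd (hmin m hsup hnotdvd) (by omega)
      apply hnd'
      obtain ⟨t, rfl⟩ := hek
      have : ((i:ℤ) - j) * ((e k : ℤ) * t) = ((e k : ℤ) * ((i:ℤ) - j)) * t := by ring
      rw [this]
      exact hc1.mul_right t
    have hP0 : P i j ≠ 0 := fun h => hne (by rw [h]; simp)
    refine ⟨hP0, le_antisymm (HahnSeries.order_le_of_coeff_ne_zero hne) ?_⟩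
    by_contra hlt
    push_neg at hlt
    exact HahnSeries.coeff_order_eq_zero.not.mpr hP0 (hvan _ hlt)
  -- pointwise sum formula for -order
  have horder : ∀ i < q, ∀ j < q, i ≠ j →
      -(P i j).order = ∑ k ∈ Finset.range g, (if cond k i j then (β (k+1) : ℤ) else 0) := by
    intro i hi j hj hij
    obtain ⟨k, hk, hc, huniq⟩ := hex i hi j hj hij
    rw [(key i hi j hj hij k hk hc).2, neg_neg]
    rw [Finset.sum_eq_single k]
    · rw [if_pos hc]
    · intro b hb hbk
      exact if_neg (huniq b (Finset.mem_range.mp hb) hbk)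
    · intro h
      exact absurd (Finset.mem_range.mpr hk) h
  -- nonvanishing of all factors
  have hPne : ∀ i ∈ Finset.range q, ∀ j ∈ (Finset.range q).erase i, P i j ≠ 0 := by
    intro i hi j hj
    obtain ⟨hji, hj'⟩ := Finset.mem_erase.mp hj
    obtain ⟨k, hk, hc, _⟩ := hex i (Finset.mem_range.mp hi) j (Finset.mem_range.mp hj') hji.symm
    exact (key i (Finset.mem_range.mp hi) j (Finset.mem_range.mp hj') hji.symm k hk hc).1
  -- order of the big product
  have hOrd : (∏ i ∈ Finset.range q, ∏ j ∈ (Finset.range q).erase i, P i j).order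
      = ∑ i ∈ Finset.range q, ∑ j ∈ (Finset.range q).erase i, (P i j).order := by
    rw [order_prod _ _ (fun i hi => Finset.prod_ne_zero_iff.2 (hPne i hi))]
    exact Finset.sum_congr rfl fun i hi => order_prod _ _ (hPne i hi)
  show _ = - (∏ i ∈ Finset.range q, ∏ j ∈ (Finset.range q).erase i, P i j).order
  rw [hOrd]
  -- turn into triple sum
  rw [← Finset.sum_neg_distrib]
  have hstep2 : ∀ i ∈ Finset.range q,
      -∑ j ∈ (Finset.range q).erase i, (P i j).order
      = ∑ j ∈ Finset.range q, ∑ k ∈ Finset.range g,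
          (if cond k i j then (β (k+1) : ℤ) else 0) := by
    intro i hi
    rw [← Finset.sum_neg_distrib]
    rw [Finset.sum_congr rfl (fun j hj => horder i (Finset.mem_range.mp hi) j
      (Finset.mem_range.mp (Finset.mem_of_mem_erase hj))
      (Finset.ne_of_mem_erase hj).symm)]
    apply Finset.sum_erase
    apply Finset.sum_eq_zero
    intro k hk
    rw [if_neg]
    rintro ⟨_, h2⟩
    exact h2 (by simp)
  rw [Finset.sum_congr rfl hstep2]
  -- congruence helper
  have hmq : ∀ a b : ℕ, ((((a + b) % q : ℕ)):ℤ) - (a:ℤ) ≡ (b:ℤ) [ZMOD (q:ℤ)] := by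
    intro a b
    have h1 : (((a + b) % q : ℕ) : ℤ) = ((a:ℤ) + (b:ℤ)) % (q:ℤ) := by push_cast; ring
    rw [h1]
    have h2 := (Int.mod_modEq ((a:ℤ) + (b:ℤ)) (q:ℤ)).sub_right (a:ℤ)
    simpa using h2
  have hmq2 : ∀ i j : ℕ, j < q → (((i + (q - j)) % q : ℕ) : ℤ) ≡ (i:ℤ) - (j:ℤ) [ZMOD (q:ℤ)] := by
    intro i j hj
    have h1 : (((i + (q - j)) % q : ℕ) : ℤ) = ((i:ℤ) + ((q:ℤ) - (j:ℤ))) % (q:ℤ) := by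
      push_cast [Nat.cast_sub hj.le]; ring
    rw [h1]
    refine (Int.mod_modEq _ _).trans ?_
    rw [Int.modEq_iff_dvd]
    exact ⟨-1, by ring⟩
  -- single-variable counts
  have hm1 : ∀ d : ℕ, d ∣ q →
      ((Finset.range q).filter (fun m : ℕ => (q:ℤ) ∣ (d:ℤ) * (m:ℤ))).card = d := by
    intro d hd
    have hd0 : 0 < d := Nat.pos_of_dvd_of_pos hd hq
    have hqd : q / d ∣ q := Nat.div_dvd_of_dvd hd
    have hflt : (Finset.range q).filter (fun m : ℕ => (q:ℤ) ∣ (d:ℤ) * (m:ℤ))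
        = (Finset.range q).filter (fun m : ℕ => (q / d) ∣ m) := by
      ext m
      simp only [Finset.mem_filter, Finset.mem_range]
      constructor
      · rintro ⟨hm, hdvd⟩
        refine ⟨hm, ?_⟩
        have hdvd' : q ∣ d * m := by exact_mod_cast hdvd
        obtain ⟨s, rfl⟩ := hd
        rw [Nat.mul_div_cancel_left _ hd0]
        exact (Nat.mul_dvd_mul_iff_left hd0).mp hdvd'
      · rintro ⟨hm, hdvd⟩
        refine ⟨hm, ?_⟩
        have : q ∣ d * m := by
          obtain ⟨s, rfl⟩ := hd
          rw [Nat.mul_div_cancel_left _ hd0] at hdvd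
          exact (Nat.mul_dvd_mul_iff_left hd0).mpr hdvd
        exact_mod_cast this
    rw [hflt, card_filter_dvd_range hq hqd, Nat.div_div_self hd hq.ne']
  -- count of m with cond-type condition
  have hmcount : ∀ k < g,
      ((Finset.range q).filter (fun m : ℕ => ((q:ℤ) ∣ (e k : ℤ) * (m:ℤ)) ∧
        ¬ ((q:ℤ) ∣ (e (k+1) : ℤ) * (m:ℤ)))).card = e k - e (k+1) := by
    intro k hk
    have hsdiff : (Finset.range q).filter (fun m : ℕ => ((q:ℤ) ∣ (e k : ℤ) * (m:ℤ)) ∧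
          ¬ ((q:ℤ) ∣ (e (k+1) : ℤ) * (m:ℤ)))
        = ((Finset.range q).filter (fun m : ℕ => (q:ℤ) ∣ (e k : ℤ) * (m:ℤ)))
          \ ((Finset.range q).filter (fun m : ℕ => (q:ℤ) ∣ (e (k+1) : ℤ) * (m:ℤ))) := by
      ext m
      simp only [Finset.mem_filter, Finset.mem_sdiff, Finset.mem_range]
      tauto
    have hsub : ((Finset.range q).filter (fun m : ℕ => (q:ℤ) ∣ (e (k+1) : ℤ) * (m:ℤ)))
        ⊆ ((Finset.range q).filter (fun m : ℕ => (q:ℤ) ∣ (e k : ℤ) * (m:ℤ))) := by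
      intro m hm
      simp only [Finset.mem_filter] at hm ⊢
      refine ⟨hm.1, hm.2.trans ?_⟩
      exact mul_dvd_mul_right (Int.natCast_dvd_natCast.mpr (hstep k hk)) _
    have hekq : ∀ k' ≤ g, e k' ∣ q := by
      intro k' hk'
      rw [← he0]
      exact hchain k' hk' 0 (Nat.zero_le _)
    rw [hsdiff, Finset.card_sdiff_of_subset hsub, hm1 _ (hekq k (by omega)), hm1 _ (hekq (k+1) (by omega))]
  -- pair count via bijection
  have hcard : ∀ k < g,
      ((Finset.range q ×ˢ Finset.range q).filter (fun p => cond k p.1 p.2)).card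
        = q * (e k - e (k+1)) := by
    intro k hk
    have hbij : ((Finset.range q ×ˢ Finset.range q).filter (fun p => cond k p.1 p.2)).card
        = (Finset.range q ×ˢ ((Finset.range q).filter
            (fun m : ℕ => ((q:ℤ) ∣ (e k : ℤ) * (m:ℤ)) ∧
              ¬ ((q:ℤ) ∣ (e (k+1) : ℤ) * (m:ℤ))))).card := by
      refine Finset.card_nbij' (fun p => (p.2, (p.1 + (q - p.2)) % q))
        (fun p => ((p.1 + p.2) % q, p.1)) ?_ ?_ ?_ ?_
      · -- maps into target
        rintro ⟨i, j⟩ hp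
        simp only [Finset.mem_coe, Finset.mem_filter, Finset.mem_product, Finset.mem_range] at hp ⊢
        obtain ⟨⟨hi, hj⟩, hc1, hc2⟩ := hp
        refine ⟨hj, Nat.mod_lt _ hq, ?_, ?_⟩
        · exact (dvd_mul_congr (hmq2 i j hj) _).mpr hc1
        · intro h; exact hc2 ((dvd_mul_congr (hmq2 i j hj) _).mp h)
      · -- maps back
        rintro ⟨j, m⟩ hp
        simp only [Finset.mem_coe, Finset.mem_filter, Finset.mem_product, Finset.mem_range] at hp ⊢
        obtain ⟨hj, hm, hc1, hc2⟩ := hp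
        refine ⟨⟨Nat.mod_lt _ hq, hj⟩, ?_, ?_⟩
        · exact (dvd_mul_congr (hmq j m) _).mpr hc1
        · intro h; exact hc2 ((dvd_mul_congr (hmq j m) _).mp h)
      · -- left inverse
        rintro ⟨i, j⟩ hp
        simp only [Finset.mem_coe, Finset.mem_filter, Finset.mem_product, Finset.mem_range] at hp
        obtain ⟨⟨hi, hj⟩, _⟩ := hp
        have : (j + (i + (q - j)) % q) % q = i := by
          calc (j + (i + (q - j)) % q) % q = (j + (i + (q - j))) % q :=
                Nat.ModEq.add_left _ (Nat.mod_modEq _ _)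
            _ = (i + q) % q := by rw [show j + (i + (q - j)) = i + q by omega]
            _ = i % q := Nat.add_mod_right i q
            _ = i := Nat.mod_eq_of_lt hi
        simp [this]
      · -- right inverse
        rintro ⟨j, m⟩ hp
        simp only [Finset.mem_coe, Finset.mem_filter, Finset.mem_product, Finset.mem_range] at hp
        obtain ⟨hj, hm, -⟩ := hp
        have : ((j + m) % q + (q - j)) % q = m := by
          calc ((j + m) % q + (q - j)) % q = ((j + m) + (q - j)) % q :=
                Nat.ModEq.add_right _ (Nat.mod_modEq _ _)
            _ = (m + q) % q := by rw [show (j + m) + (q - j) = m + q by omega]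
            _ = m % q := Nat.add_mod_right m q
            _ = m := Nat.mod_eq_of_lt hm
        simp [this]
    rw [hbij, Finset.card_product, Finset.card_range, hmcount k hk]
  -- swap sums
  have hswap : (∑ i ∈ Finset.range q, ∑ j ∈ Finset.range q, ∑ k ∈ Finset.range g,
        (if cond k i j then (β (k+1) : ℤ) else 0))
      = ∑ k ∈ Finset.range g, ∑ i ∈ Finset.range q, ∑ j ∈ Finset.range q,
        (if cond k i j then (β (k+1) : ℤ) else 0) := by
    rw [Finset.sum_congr rfl (fun i _ => Finset.sum_comm)]
    exact Finset.sum_comm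
  rw [hswap]
  -- evaluate inner double sums
  have hinner : ∀ k ∈ Finset.range g,
      (∑ i ∈ Finset.range q, ∑ j ∈ Finset.range q, (if cond k i j then (β (k+1) : ℤ) else 0))
        = ((q * (e k - e (k+1)) : ℕ) : ℤ) * (β (k+1) : ℤ) := by
    intro k hk
    rw [← Finset.sum_product']
    rw [← Finset.sum_filter]
    rw [Finset.sum_const, nsmul_eq_mul, hcard k (Finset.mem_range.mp hk)]
  rw [Finset.sum_congr rfl hinner]
  rw [Finset.mul_sum]
  refine Finset.sum_congr rfl fun k _ => ?_
  rw [Nat.cast_mul]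
  ring
end

section
/- Suppose an irreducible E_{f,q} has dual Puiseux characteristic (q, p; β₁, …, β_g) with p < q (hence p = β₁). Then the local Fourier transform F^{(∞,0)}(E_{f,q}) ≅ E_{g,q-p} has dual Puiseux characteristic (q-p, β₁; β₂, …, β_g) if (q-p) | β₁, and (q-p, β₁; β₁, β₂, …, β_g) otherwise. -/
noncomputable section
namespace FourierAux
open PowerSeries Finset

variable {K : Type*} [Field K]

/-- products: if low coefficients of `A` (below `m`) and of `B` (below `l`) vanish, then
low coefficients of `A*B` below `m+l` vanish and the `(m+l)`-th is the product. -/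
theorem lc_mul {A B : PowerSeries K} {m l : ℕ}
    (hA : ∀ k < m, PowerSeries.coeff k A = 0) (hB : ∀ k < l, PowerSeries.coeff k B = 0) :
    (∀ k < m + l, PowerSeries.coeff k (A * B) = 0) ∧
      PowerSeries.coeff (m + l) (A * B) = PowerSeries.coeff m A * PowerSeries.coeff l B := by
  constructor
  · intro n hn
    rw [PowerSeries.coeff_mul]
    refine Finset.sum_eq_zero fun p hp => ?_
    rw [Finset.HasAntidiagonal.mem_antidiagonal] at hp
    rcases lt_or_ge p.1 m with h | h
    · rw [hA _ h, zero_mul]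
    · have : p.2 < l := by omega
      rw [hB _ this, mul_zero]
  · rw [PowerSeries.coeff_mul]
    rw [Finset.sum_eq_single (m, l)]
    · intro p hp hne
      rw [Finset.HasAntidiagonal.mem_antidiagonal] at hp
      rcases lt_or_ge p.1 m with h | h
      · rw [hA _ h, zero_mul]
      · rcases lt_or_ge p.2 l with h2 | h2
        · rw [hB _ h2, mul_zero]
        · exfalso; apply hne
          have h1 : p.1 = m := by omega
          have h2 : p.2 = l := by omega
          exact Prod.ext h1 h2
    · intro h
      simp [Finset.HasAntidiagonal.mem_antidiagonal] at h

theorem lc_pow {A : PowerSeries K} (h0 : PowerSeries.coeff 0 A = 0) (k : ℕ) :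
    (∀ n < k, PowerSeries.coeff n (A ^ k) = 0) ∧
      PowerSeries.coeff k (A ^ k) = (PowerSeries.coeff 1 A) ^ k := by
  induction k with
  | zero => exact ⟨fun n hn => absurd hn (Nat.not_lt_zero n), by simp⟩
  | succ k ih =>
    have hA1 : ∀ n < 1, PowerSeries.coeff n A = 0 := by
      intro n hn; interval_cases n; exact h0
    have := lc_mul (A := A ^ k) (B := A) ih.1 hA1
    rw [pow_succ, pow_succ]
    exact ⟨this.1, by rw [this.2, ih.2]⟩

/-- substitution, defined coefficientwise -/
def pcomp (S Y : PowerSeries K) : PowerSeries K :=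
  PowerSeries.mk fun n => ∑ k ∈ Finset.range (n + 1),
    PowerSeries.coeff k Y * PowerSeries.coeff n (S ^ k)

theorem coeff_pcomp (S Y : PowerSeries K) (n : ℕ) :
    PowerSeries.coeff n (pcomp S Y) = ∑ k ∈ Finset.range (n + 1),
      PowerSeries.coeff k Y * PowerSeries.coeff n (S ^ k) :=
  PowerSeries.coeff_mk _ _

theorem pcomp_sub (S Y Y' : PowerSeries K) :
    pcomp S (Y - Y') = pcomp S Y - pcomp S Y' := by
  ext n
  simp only [coeff_pcomp, map_sub, sub_mul, Finset.sum_sub_distrib]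

theorem pcomp_rescale (S Y : PowerSeries K) (c : K) :
    pcomp (PowerSeries.rescale c S) Y = PowerSeries.rescale c (pcomp S Y) := by
  ext n
  simp only [coeff_pcomp, PowerSeries.coeff_rescale, ← map_pow, Finset.mul_sum]
  refine Finset.sum_congr rfl fun k _ => ?_
  ring

theorem pcomp_C_mul (S Y : PowerSeries K) (c : K) :
    pcomp (PowerSeries.C c * S) Y = pcomp S (PowerSeries.rescale c Y) := by
  ext n
  simp only [coeff_pcomp, PowerSeries.coeff_rescale]
  refine Finset.sum_congr rfl fun k _ => ?_
  rw [mul_pow, ← map_pow, PowerSeries.coeff_C_mul]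
  ring

/-- forward triangular lemma -/
theorem pcomp_low' {S Y : PowerSeries K} (hS0 : PowerSeries.coeff 0 S = 0) {m : ℕ}
    (h : ∀ k < m, PowerSeries.coeff k Y = 0) :
    (∀ n < m, PowerSeries.coeff n (pcomp S Y) = 0) ∧
      PowerSeries.coeff m (pcomp S Y) =
        PowerSeries.coeff m Y * (PowerSeries.coeff 1 S) ^ m := by
  constructor
  · intro n hn
    rw [coeff_pcomp]
    refine Finset.sum_eq_zero fun k hk => ?_
    rw [Finset.mem_range] at hk
    rw [h k (by omega), zero_mul]
  · rw [coeff_pcomp, Finset.sum_eq_single m]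
    · rw [(lc_pow hS0 m).2]
    · intro k hk hne
      rw [Finset.mem_range] at hk
      rcases lt_or_ge k m with hlt | hge
      · rw [h k hlt, zero_mul]
      · exfalso; omega
    · intro h'; exfalso; exact h' (Finset.mem_range.mpr (by omega))

/-- reverse triangular lemma -/
theorem pcomp_low {S Y : PowerSeries K} (hS0 : PowerSeries.coeff 0 S = 0) {m : ℕ}
    (h : ∀ k < m, PowerSeries.coeff k (pcomp S Y) = 0)
    (hS1 : PowerSeries.coeff 1 S ≠ 0) :
    (∀ k < m, PowerSeries.coeff k Y = 0) ∧
      PowerSeries.coeff m Y * (PowerSeries.coeff 1 S) ^ m =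
        PowerSeries.coeff m (pcomp S Y) := by
  have main : ∀ n, n < m → PowerSeries.coeff n Y = 0 := by
    intro n
    induction n using Nat.strong_induction_on with
    | _ n ih =>
      intro hn
      have h0 := h n hn
      rw [coeff_pcomp, Finset.sum_eq_single n] at h0
      · rw [(lc_pow hS0 n).2] at h0
        exact (mul_eq_zero.mp h0).resolve_right (pow_ne_zero _ hS1)
      · intro k hk hne
        rw [Finset.mem_range] at hk
        have hklt : k < n := by omega
        rw [ih k hklt (lt_trans hklt hn), zero_mul]
      · intro h'; exfalso; exact h' (Finset.mem_range.mpr (by omega))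
  refine ⟨main, ?_⟩
  exact ((pcomp_low' hS0 main).2).symm

theorem exists_first {A : PowerSeries K} (hA : A ≠ 0) :
    ∃ m, (∀ k < m, PowerSeries.coeff k A = 0) ∧ PowerSeries.coeff m A ≠ 0 := by
  classical
  have hex : ∃ n, PowerSeries.coeff n A ≠ 0 := by
    by_contra h
    push_neg at h
    exact hA (PowerSeries.ext fun n => by rw [h n, map_zero])
  refine ⟨Nat.find hex, fun k hk => ?_, Nat.find_spec hex⟩
  by_contra h
  exact absurd hk (not_lt.mpr (Nat.find_le h))

theorem first_unique {A : PowerSeries K} {m m' : ℕ}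
    (h1 : ∀ k < m, PowerSeries.coeff k A = 0) (h2 : PowerSeries.coeff m A ≠ 0)
    (h1' : ∀ k < m', PowerSeries.coeff k A = 0) (h2' : PowerSeries.coeff m' A ≠ 0) :
    m = m' := by
  rcases lt_trichotomy m m' with h | h | h
  · exact absurd (h1' m h) h2
  · exact h
  · exact absurd (h1 m' h) h2'


set_option maxHeartbeats 1000000 in
/-- **Core lemma**: transfer of the first "conjugation-detected" exponent from `Yf` to `Yg`. -/
theorem core {K : Type*} [Field K] [CharZero K] (p q : ℕ) (hp : 0 < p) (hpq : p < q)
    (S Yf Yg : PowerSeries K)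
    (hS0 : PowerSeries.coeff 0 S = 0) (hS1 : PowerSeries.coeff 1 S ≠ 0)
    (hXq : Yf * S ^ (q - p) = PowerSeries.X ^ q)
    (hYflt : ∀ k < p, PowerSeries.coeff k Yf = 0) (hYfp : PowerSeries.coeff p Yf ≠ 0)
    (hT : pcomp S Yg = -Yf)
    (η : K) (hηp : η ^ p = 1)
    (μ : ℕ) (hμlt : ∀ k < μ, PowerSeries.coeff k (PowerSeries.rescale η Yf - Yf) = 0)
    (hμ : PowerSeries.coeff μ (PowerSeries.rescale η Yf - Yf) ≠ 0) :
    (∀ k < μ, PowerSeries.coeff k (PowerSeries.rescale η Yg - Yg) = 0) ∧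
      PowerSeries.coeff μ (PowerSeries.rescale η Yg - Yg) ≠ 0 := by
  have hη0 : η ≠ 0 := by
    intro h; rw [h, zero_pow hp.ne'] at hηp; exact zero_ne_one hηp
  set c₁ := PowerSeries.coeff 1 S with hc₁def
  -- p < μ
  have hpltμ : p < μ := by
    by_contra hle
    push_neg at hle
    rcases lt_or_eq_of_le hle with h | h
    · exact hμ (by rw [map_sub, PowerSeries.coeff_rescale, hYflt μ h, mul_zero, sub_zero])
    · exact hμ (by rw [h, map_sub, PowerSeries.coeff_rescale, hηp, one_mul, sub_self])
  -- factor S = X * S₁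
  set S₁ : PowerSeries K := PowerSeries.mk fun n => PowerSeries.coeff (n + 1) S with hS₁def
  have hXS₁ : PowerSeries.X * S₁ = S := by
    ext n
    cases n with
    | zero =>
      rw [PowerSeries.coeff_zero_eq_constantCoeff, map_mul, PowerSeries.constantCoeff_X,
        zero_mul, ← PowerSeries.coeff_zero_eq_constantCoeff, hS0]
    | succ n => rw [PowerSeries.coeff_succ_X_mul, hS₁def, PowerSeries.coeff_mk]
  have hS₁0 : PowerSeries.constantCoeff S₁ = c₁ := by
    rw [← PowerSeries.coeff_zero_eq_constantCoeff, hS₁def, PowerSeries.coeff_mk]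
  set S₁' : PowerSeries K := PowerSeries.mk
      fun n => PowerSeries.coeff (n + 1) (PowerSeries.rescale η S) with hS₁'def
  have hXS₁' : PowerSeries.X * S₁' = PowerSeries.rescale η S := by
    ext n
    cases n with
    | zero =>
      rw [PowerSeries.coeff_zero_eq_constantCoeff, map_mul, PowerSeries.constantCoeff_X,
        zero_mul, ← PowerSeries.coeff_zero_eq_constantCoeff, PowerSeries.coeff_rescale,
        hS0, mul_zero]
    | succ n => rw [PowerSeries.coeff_succ_X_mul, hS₁'def, PowerSeries.coeff_mk]
  have hS₁'0 : PowerSeries.constantCoeff S₁' = η * c₁ := by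
    rw [← PowerSeries.coeff_zero_eq_constantCoeff, hS₁'def, PowerSeries.coeff_mk,
      PowerSeries.coeff_rescale, pow_one]
  -- the unit U
  set U : PowerSeries K := PowerSeries.C η⁻¹ * S₁' * S₁⁻¹ with hUdef
  have hS₁inv : S₁ * S₁⁻¹ = 1 := PowerSeries.mul_inv_cancel _ (by rw [hS₁0]; exact hS1)
  have hCη : PowerSeries.C η * PowerSeries.C η⁻¹ = 1 := by
    rw [← map_mul, mul_inv_cancel₀ hη0, map_one]
  have hU : PowerSeries.C η * S * U = PowerSeries.rescale η S := by
    rw [← hXS₁', ← hXS₁, hUdef]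
    calc PowerSeries.C η * (PowerSeries.X * S₁) * (PowerSeries.C η⁻¹ * S₁' * S₁⁻¹)
        = (PowerSeries.C η * PowerSeries.C η⁻¹) * (S₁ * S₁⁻¹) * (PowerSeries.X * S₁') := by
          ring
      _ = PowerSeries.X * S₁' := by rw [hCη, hS₁inv, one_mul, one_mul]
  have hU0 : PowerSeries.constantCoeff U = 1 := by
    rw [hUdef, map_mul, map_mul, PowerSeries.constantCoeff_C, hS₁'0,
      PowerSeries.constantCoeff_inv, hS₁0]
    field_simp
  -- key relation
  have hSne : S ≠ 0 := fun h => hS1 (by rw [hc₁def, h, map_zero])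
  have hqp0 : 0 < q - p := by omega
  have hKey : U ^ (q - p) * PowerSeries.rescale η Yf = Yf := by
    have h2 : PowerSeries.rescale η Yf * (PowerSeries.rescale η S) ^ (q - p)
        = PowerSeries.C (η ^ q) * PowerSeries.X ^ q := by
      rw [← map_pow, ← map_mul, hXq, map_pow, PowerSeries.rescale_X, mul_pow, ← map_pow]
    rw [← hU] at h2
    have h3 : (PowerSeries.rescale η Yf * PowerSeries.C (η ^ (q - p)) * U ^ (q - p))
        * S ^ (q - p) = (PowerSeries.C (η ^ q) * Yf) * S ^ (q - p) := by
      rw [← hXq] at h2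
      calc (PowerSeries.rescale η Yf * PowerSeries.C (η ^ (q - p)) * U ^ (q - p))
            * S ^ (q - p)
          = PowerSeries.rescale η Yf * (PowerSeries.C η * S * U) ^ (q - p) := by
            simp only [mul_pow, map_pow]; ring
        _ = PowerSeries.C (η ^ q) * (Yf * S ^ (q - p)) := h2
        _ = PowerSeries.C (η ^ q) * Yf * S ^ (q - p) := by ring
    have h4 := mul_right_cancel₀ (pow_ne_zero _ hSne) h3
    have hηq : η ^ q = η ^ (q - p) := by
      nth_rewrite 1 [show q = (q - p) + p by omega]
      rw [pow_add, hηp, mul_one]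
    rw [hηq] at h4
    have h5 : PowerSeries.C (η ^ (q - p)) ≠ 0 := fun h => pow_ne_zero (q - p) hη0 (by
      have := congrArg (PowerSeries.constantCoeff) h
      simpa using this)
    -- h4 : rescale η Yf * C (η^(q-p)) * U^(q-p) = C (η^(q-p)) * Yf
    apply mul_left_cancel₀ h5
    calc PowerSeries.C (η ^ (q - p)) * (U ^ (q - p) * PowerSeries.rescale η Yf)
        = PowerSeries.rescale η Yf * PowerSeries.C (η ^ (q - p)) * U ^ (q - p) := by ring
      _ = PowerSeries.C (η ^ (q - p)) * Yf := h4
  -- W and its first nonzero coefficient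
  set W : PowerSeries K := Yf - PowerSeries.rescale η Yf with hWdef
  have hWlt : ∀ k < μ, PowerSeries.coeff k W = 0 := by
    intro k hk
    have h' := hμlt k hk
    rw [map_sub, sub_eq_zero] at h' ⊢
    exact h'.symm
  have hWμ : PowerSeries.coeff μ W ≠ 0 := by
    intro h
    apply hμ
    rw [map_sub, sub_eq_zero] at h ⊢
    exact h.symm
  have hKey2 : (U ^ (q - p) - 1) * PowerSeries.rescale η Yf = W := by
    rw [sub_mul, one_mul, hKey, hWdef]
  set V : PowerSeries K := U - 1 with hVdef
  have hVne : V ≠ 0 := by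
    intro h
    have hU1 : U = 1 := by rwa [hVdef, sub_eq_zero] at h
    rw [hU1, one_pow, sub_self, zero_mul] at hKey2
    exact hWμ (by rw [← hKey2, map_zero])
  obtain ⟨r, hrlt, hrne⟩ := exists_first hVne
  have hEk : ∀ k : ℕ, PowerSeries.coeff 0 (∑ i ∈ Finset.range k, U ^ i) = (k : K) := by
    intro k
    rw [map_sum]
    have : ∀ i ∈ Finset.range k, PowerSeries.coeff 0 (U ^ i) = 1 := by
      intro i _
      rw [PowerSeries.coeff_zero_eq_constantCoeff, map_pow, hU0, one_pow]
    rw [Finset.sum_congr rfl this, Finset.sum_const, Finset.card_range, nsmul_eq_mul, mul_one]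
  set E : PowerSeries K := ∑ i ∈ Finset.range (q - p), U ^ i with hEdef
  have hgeom : V * E = U ^ (q - p) - 1 := by
    rw [hVdef, hEdef, mul_comm]
    exact geom_sum_mul U (q - p)
  have hE0 : PowerSeries.coeff 0 E = ((q - p : ℕ) : K) := hEk (q - p)
  have hE0ne : PowerSeries.coeff 0 E ≠ 0 := by
    rw [hE0]
    exact Nat.cast_ne_zero.mpr (Nat.sub_ne_zero_of_lt hpq)
  have hRYflt : ∀ k < p, PowerSeries.coeff k (PowerSeries.rescale η Yf) = 0 := by
    intro k hk; rw [PowerSeries.coeff_rescale, hYflt k hk, mul_zero]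
  have hRYfp : PowerSeries.coeff p (PowerSeries.rescale η Yf) = PowerSeries.coeff p Yf := by
    rw [PowerSeries.coeff_rescale, hηp, one_mul]
  -- W = V * E * rescale η Yf, leading coefficient analysis
  have hWfact : V * E * PowerSeries.rescale η Yf = W := by rw [hgeom, hKey2]
  have hVE := lc_mul (A := V) (B := E) (m := r) (l := 0) hrlt
    (fun k hk => absurd hk (Nat.not_lt_zero k))
  rw [add_zero] at hVE
  have hVERf := lc_mul (m := r) (l := p) hVE.1 hRYflt
  rw [hWfact] at hVERf
  have hrp : r + p = μ := by
    refine first_unique hVERf.1 ?_ hWlt hWμ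
    rw [hVERf.2, hVE.2, hRYfp]
    exact mul_ne_zero (mul_ne_zero hrne hE0ne) hYfp
  have hWval : PowerSeries.coeff μ W =
      PowerSeries.coeff r V * ((q - p : ℕ) : K) * PowerSeries.coeff p Yf := by
    rw [← hrp, hVERf.2, hVE.2, hE0, hRYfp]
  -- low coefficients of Yg
  have hYglow := pcomp_low (S := S) (Y := Yg) hS0 (m := p)
    (fun k hk => by rw [hT, map_neg, hYflt k hk, neg_zero]) hS1
  have hYgp : PowerSeries.coeff p Yg * c₁ ^ p = - PowerSeries.coeff p Yf := by
    rw [hYglow.2, hT, map_neg]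
  -- the two compositions
  set A' : PowerSeries K := PowerSeries.C η * S with hA'def
  have hA'0 : PowerSeries.coeff 0 A' = 0 := by
    rw [hA'def, PowerSeries.coeff_C_mul, hS0, mul_zero]
  have hA'1 : PowerSeries.coeff 1 A' = η * c₁ := by
    rw [hA'def, PowerSeries.coeff_C_mul]
  set P₁ : PowerSeries K := pcomp A' Yg with hP₁def
  set P₂ : PowerSeries K := pcomp (A' * U) Yg with hP₂def
  have hP₂ : P₂ = - PowerSeries.rescale η Yf := by
    rw [hP₂def, show A' * U = PowerSeries.rescale η S from hU, pcomp_rescale, hT, map_neg]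
  have hP₁' : P₁ = pcomp S (PowerSeries.rescale η Yg) := by
    rw [hP₁def, hA'def, pcomp_C_mul]
  have hDco : ∀ n : ℕ, PowerSeries.coeff n (P₂ - P₁) =
      ∑ k ∈ Finset.range (n + 1), PowerSeries.coeff k Yg *
        PowerSeries.coeff n (A' ^ k * (V * ∑ i ∈ Finset.range k, U ^ i)) := by
    intro n
    rw [map_sub, hP₂def, hP₁def, coeff_pcomp, coeff_pcomp, ← Finset.sum_sub_distrib]
    refine Finset.sum_congr rfl fun k _ => ?_
    have heq : (A' * U) ^ k - A' ^ k = A' ^ k * (V * ∑ i ∈ Finset.range k, U ^ i) := by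
      have hg : V * ∑ i ∈ Finset.range k, U ^ i = U ^ k - 1 := by
        rw [hVdef, mul_comm]; exact geom_sum_mul U k
      rw [hg, mul_pow]; ring
    rw [← mul_sub, ← map_sub, heq]
  have hZ : ∀ k : ℕ,
      (∀ n < k + r, PowerSeries.coeff n
        (A' ^ k * (V * ∑ i ∈ Finset.range k, U ^ i)) = 0) ∧
      PowerSeries.coeff (k + r) (A' ^ k * (V * ∑ i ∈ Finset.range k, U ^ i)) =
        (η * c₁) ^ k * (PowerSeries.coeff r V * (k : K)) := by
    intro k
    have h1 := lc_pow hA'0 k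
    have hVE' := lc_mul (A := V) (B := ∑ i ∈ Finset.range k, U ^ i) (m := r) (l := 0) hrlt
      (fun j hj => absurd hj (Nat.not_lt_zero j))
    rw [add_zero] at hVE'
    have h2 := lc_mul (m := k) (l := r) h1.1 hVE'.1
    rw [← mul_assoc] at h2 ⊢
    refine ⟨h2.1, ?_⟩
    rw [h2.2, h1.2, hVE'.2, hEk k, hA'1]
  have hDlt : ∀ n < μ, PowerSeries.coeff n (P₂ - P₁) = 0 := by
    intro n hn
    rw [hDco]
    refine Finset.sum_eq_zero fun k hk => ?_
    rw [Finset.mem_range] at hk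
    rcases lt_or_ge k p with h | h
    · rw [hYglow.1 k h, zero_mul]
    · rw [(hZ k).1 n (by omega), mul_zero]
  have hDμ : PowerSeries.coeff μ (P₂ - P₁) =
      PowerSeries.coeff p Yg *
        ((η * c₁) ^ p * (PowerSeries.coeff r V * (p : K))) := by
    rw [hDco, Finset.sum_eq_single p]
    · rw [show μ = p + r from by omega, (hZ p).2]
    · intro k hk hne
      rw [Finset.mem_range] at hk
      rcases lt_or_ge k p with h | h
      · rw [hYglow.1 k h, zero_mul]
      · have hkp : p < k := by omega
        rw [(hZ k).1 μ (by omega), mul_zero]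
    · intro h; exact absurd (Finset.mem_range.mpr (by omega)) h
  -- put everything together
  have hΘ : pcomp S (PowerSeries.rescale η Yg - Yg) = W - (P₂ - P₁) := by
    rw [pcomp_sub, ← hP₁', hT, hP₂, hWdef]; ring
  have hΘlt : ∀ k < μ, PowerSeries.coeff k
      (pcomp S (PowerSeries.rescale η Yg - Yg)) = 0 := by
    intro k hk
    rw [hΘ, map_sub, hWlt k hk, hDlt k hk, sub_zero]
  have hΘμ : PowerSeries.coeff μ (pcomp S (PowerSeries.rescale η Yg - Yg)) ≠ 0 := by
    rw [hΘ, map_sub, hWval, hDμ]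
    have hηc : (η * c₁) ^ p = c₁ ^ p := by rw [mul_pow, hηp, one_mul]
    rw [hηc]
    have h1 : PowerSeries.coeff p Yg * (c₁ ^ p * (PowerSeries.coeff r V * (p : K)))
        = -PowerSeries.coeff p Yf * (PowerSeries.coeff r V * (p : K)) := by
      rw [← hYgp]; ring
    rw [h1]
    have hcast : ((q - p : ℕ) : K) + (p : K) = (q : K) := by
      rw [← Nat.cast_add]
      congr 1
      omega
    have h2 : PowerSeries.coeff r V * ((q - p : ℕ) : K) * PowerSeries.coeff p Yf -
        -PowerSeries.coeff p Yf * (PowerSeries.coeff r V * (p : K)) =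
        PowerSeries.coeff r V * PowerSeries.coeff p Yf * (q : K) := by
      rw [← hcast]; ring
    rw [h2]
    exact mul_ne_zero (mul_ne_zero hrne hYfp)
      (Nat.cast_ne_zero.mpr (by omega))
  have hfin := pcomp_low (S := S) (Y := PowerSeries.rescale η Yg - Yg) hS0 (m := μ) hΘlt hS1
  refine ⟨hfin.1, fun h => ?_⟩
  apply hΘμ
  rw [← hfin.2, h, zero_mul]
-- ## Laurent series layer

theorem coeff_conjRoot (c : K) (F : LaurentSeries K) (n : ℤ) :
    (LaurentSeries.conjRoot c F).coeff n = c ^ n * F.coeff n := rfl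

theorem conjRoot_support_subset (c : K) (F : LaurentSeries K) :
    (LaurentSeries.conjRoot c F).support ⊆ F.support := by
  intro n hn
  rw [HahnSeries.mem_support] at hn ⊢
  intro h
  exact hn (by rw [coeff_conjRoot, h, mul_zero])

theorem conjRoot_support_eq {c : K} (hc : c ≠ 0) (F : LaurentSeries K) :
    (LaurentSeries.conjRoot c F).support = F.support := by
  refine subset_antisymm (conjRoot_support_subset c F) fun n hn => ?_
  rw [HahnSeries.mem_support] at hn ⊢
  rw [coeff_conjRoot]
  exact mul_ne_zero (zpow_ne_zero _ hc) hn

theorem conjRoot_mul {c : K} (hc : c ≠ 0) (A B : LaurentSeries K) :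
    LaurentSeries.conjRoot c (A * B) =
      LaurentSeries.conjRoot c A * LaurentSeries.conjRoot c B := by
  ext n
  have hset : Finset.antidiagonal (LaurentSeries.conjRoot c A).isPWO_support
      (LaurentSeries.conjRoot c B).isPWO_support n =
      Finset.antidiagonal A.isPWO_support B.isPWO_support n := by
    ext ij
    simp only [Finset.mem_addAntidiagonal, conjRoot_support_eq hc]
  rw [coeff_conjRoot, HahnSeries.coeff_mul, HahnSeries.coeff_mul, hset, Finset.mul_sum]
  refine Finset.sum_congr rfl fun ij hij => ?_
  rw [Finset.mem_addAntidiagonal] at hij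
  rw [coeff_conjRoot, coeff_conjRoot, ← hij.2.2, zpow_add₀ hc]
  ring

theorem conjRoot_one {c : K} : LaurentSeries.conjRoot c (1 : LaurentSeries K) = 1 := by
  ext n
  rw [coeff_conjRoot]
  rcases eq_or_ne n 0 with h | h
  · subst h; rw [zpow_zero, one_mul]
  · simp only [HahnSeries.coeff_one, if_neg h, mul_zero]

theorem ofPS_coeff_neg (Y : PowerSeries K) {n : ℤ} (hn : n < 0) :
    (HahnSeries.ofPowerSeries ℤ K Y).coeff n = 0 := by
  rw [HahnSeries.ofPowerSeries_apply]
  refine HahnSeries.embDomain_notin_range ?_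
  rintro ⟨m, hm⟩
  have hm' : ((m : ℕ) : ℤ) = n := hm
  omega

theorem conjRoot_ofPowerSeries (c : K) (Y : PowerSeries K) :
    LaurentSeries.conjRoot c (HahnSeries.ofPowerSeries ℤ K Y) =
      HahnSeries.ofPowerSeries ℤ K (PowerSeries.rescale c Y) := by
  ext n
  rw [coeff_conjRoot]
  rcases lt_or_ge n 0 with h | h
  · rw [ofPS_coeff_neg Y h, ofPS_coeff_neg _ h, mul_zero]
  · obtain ⟨m, rfl⟩ := Int.eq_ofNat_of_zero_le h
    rw [HahnSeries.ofPowerSeries_apply_coeff, HahnSeries.ofPowerSeries_apply_coeff,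
      PowerSeries.coeff_rescale, zpow_natCast]

theorem order_eq_of_coeffs {x : LaurentSeries K} {m : ℤ}
    (h1 : ∀ n < m, x.coeff n = 0) (h2 : x.coeff m ≠ 0) : x.order = m := by
  have hx : x ≠ 0 := fun h => h2 (by rw [h, HahnSeries.coeff_zero])
  refine le_antisymm (HahnSeries.order_le_of_coeff_ne_zero h2) ?_
  by_contra hlt
  push_neg at hlt
  exact (mt HahnSeries.coeff_order_eq_zero.mp hx) (h1 _ hlt)

theorem ofPS_order {Y : PowerSeries K} {m : ℕ}
    (h1 : ∀ k < m, PowerSeries.coeff k Y = 0) (h2 : PowerSeries.coeff m Y ≠ 0) :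
    (HahnSeries.ofPowerSeries ℤ K Y).order = (m : ℤ) ∧
      (HahnSeries.ofPowerSeries ℤ K Y).coeff (m : ℤ) ≠ 0 := by
  have hc : (HahnSeries.ofPowerSeries ℤ K Y).coeff (m : ℤ) ≠ 0 := by
    rw [HahnSeries.ofPowerSeries_apply_coeff]; exact h2
  refine ⟨order_eq_of_coeffs (fun n hn => ?_) hc, hc⟩
  rcases lt_or_ge n 0 with h | h
  · exact ofPS_coeff_neg Y h
  · obtain ⟨k, rfl⟩ := Int.eq_ofNat_of_zero_le h
    rw [HahnSeries.ofPowerSeries_apply_coeff]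
    exact h1 k (by exact_mod_cast hn)

set_option maxHeartbeats 1000000 in
/-- **Level lemma**: the minimal exponent of `supp G` not divisible by `D` equals that of
`supp F`, provided `D ∣ p`. -/
theorem level {K : Type*} [Field K] [CharZero K] [IsAlgClosed K]
    (p q : ℕ) (hp : 0 < p) (hpq : p < q)
    (S Yf Yg : PowerSeries K)
    (hS0 : PowerSeries.coeff 0 S = 0) (hS1 : PowerSeries.coeff 1 S ≠ 0)
    (hXq : Yf * S ^ (q - p) = PowerSeries.X ^ q)
    (hYflt : ∀ k < p, PowerSeries.coeff k Yf = 0) (hYfp : PowerSeries.coeff p Yf ≠ 0)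
    (hT : pcomp S Yg = -Yf)
    (hYglt : ∀ k < p, PowerSeries.coeff k Yg = 0) (hYgp : PowerSeries.coeff p Yg ≠ 0)
    (F G : LaurentSeries K)
    (hFYf : F * HahnSeries.ofPowerSeries ℤ K Yf = 1)
    (hGYg : G * HahnSeries.ofPowerSeries ℤ K Yg = 1)
    (hFlow : ∀ n < -(p : ℤ), F.coeff n = 0) (hFlead : F.coeff (-(p : ℤ)) ≠ 0)
    (hGlow : ∀ n < -(p : ℤ), G.coeff n = 0) (hGlead : G.coeff (-(p : ℤ)) ≠ 0)
    (D : ℕ) (hD : 0 < D) (hDp : D ∣ p)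
    (b : ℕ) (hb : ¬ ((D : ℤ) ∣ (b : ℤ)))
    (hmem : F.coeff (-(b : ℤ)) ≠ 0)
    (hmin : ∀ i : ℤ, F.coeff i ≠ 0 → ¬ ((D : ℤ) ∣ i) → -(b : ℤ) ≤ i) :
    G.coeff (-(b : ℤ)) ≠ 0 ∧
      ∀ i : ℤ, G.coeff i ≠ 0 → ¬ ((D : ℤ) ∣ i) → -(b : ℤ) ≤ i := by
  -- a primitive D-th root of unity
  haveI : NeZero ((D : ℕ) : K) := ⟨Nat.cast_ne_zero.mpr hD.ne'⟩
  obtain ⟨η, hη⟩ := HasEnoughRootsOfUnity.exists_primitiveRoot K D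
  have hηD : η ^ D = 1 := hη.pow_eq_one
  have hη0 : η ≠ 0 := fun h => by
    rw [h, zero_pow hD.ne'] at hηD; exact zero_ne_one hηD
  have hηp : η ^ p = 1 := by
    obtain ⟨c, rfl⟩ := hDp
    rw [pow_mul, hηD, one_pow]
  have hu : IsPrimitiveRoot (Units.mk0 η hη0) D :=
    IsPrimitiveRoot.coe_units_iff.mp (by simpa using hη)
  have hzpow : ∀ n : ℤ, η ^ n = 1 ↔ (D : ℤ) ∣ n := by
    intro n
    rw [← hu.zpow_eq_one_iff_dvd n]
    constructor
    · intro h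
      ext
      rw [Units.val_zpow_eq_zpow_val, Units.val_one, Units.val_mk0]
      exact h
    · intro h
      have := congrArg (Units.val) h
      rwa [Units.val_zpow_eq_zpow_val, Units.val_one, Units.val_mk0] at this
  -- conjugated identities
  have hσF : LaurentSeries.conjRoot η F *
      HahnSeries.ofPowerSeries ℤ K (PowerSeries.rescale η Yf) = 1 := by
    rw [← conjRoot_ofPowerSeries, ← conjRoot_mul hη0, hFYf, conjRoot_one]
  have hσG : LaurentSeries.conjRoot η G *
      HahnSeries.ofPowerSeries ℤ K (PowerSeries.rescale η Yg) = 1 := by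
    rw [← conjRoot_ofPowerSeries, ← conjRoot_mul hη0, hGYg, conjRoot_one]
  -- rescale η Yf ≠ Yf
  have hRYfne : PowerSeries.rescale η Yf - Yf ≠ 0 := by
    intro h
    rw [sub_eq_zero] at h
    have hFF : LaurentSeries.conjRoot η F = F := by
      rw [h] at hσF
      have hYfne : (HahnSeries.ofPowerSeries ℤ K Yf) ≠ 0 := by
        intro hz
        rw [hz, mul_zero] at hFYf
        exact zero_ne_one hFYf
      exact mul_right_cancel₀ hYfne (hσF.trans hFYf.symm)
    have := congrFun (congrArg HahnSeries.coeff hFF) (-(b : ℤ))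
    rw [coeff_conjRoot] at this
    have hη1 : η ^ (-(b : ℤ)) = 1 := by
      by_contra hne1
      apply hmem
      have h2 : (η ^ (-(b : ℤ)) - 1) * F.coeff (-(b : ℤ)) = 0 := by
        rw [sub_mul, this, one_mul, sub_self]
      exact (mul_eq_zero.mp h2).resolve_left (sub_ne_zero.mpr hne1)
    rw [hzpow] at hη1
    exact hb (by rwa [Int.dvd_neg] at hη1)
  obtain ⟨μ, hμlt, hμne⟩ := exists_first hRYfne
  -- apply the core lemma
  obtain ⟨hglt, hgne⟩ := core p q hp hpq S Yf Yg hS0 hS1 hXq hYflt hYfp hT η hηp μ hμlt hμne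
  -- orders of the power series differences
  have hWfdata : ∀ k < μ, PowerSeries.coeff k (Yf - PowerSeries.rescale η Yf) = 0 := by
    intro k hk
    have := hμlt k hk
    rw [map_sub, sub_eq_zero] at this ⊢
    exact this.symm
  have hWfne : PowerSeries.coeff μ (Yf - PowerSeries.rescale η Yf) ≠ 0 := by
    intro h
    apply hμne
    rw [map_sub, sub_eq_zero] at h ⊢
    exact h.symm
  have hWgdata : ∀ k < μ, PowerSeries.coeff k (Yg - PowerSeries.rescale η Yg) = 0 := by
    intro k hk
    have := hglt k hk
    rw [map_sub, sub_eq_zero] at this ⊢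
    exact this.symm
  have hWgne : PowerSeries.coeff μ (Yg - PowerSeries.rescale η Yg) ≠ 0 := by
    intro h
    apply hgne
    rw [map_sub, sub_eq_zero] at h ⊢
    exact h.symm
  have hWf := ofPS_order hWfdata hWfne
  have hWg := ofPS_order hWgdata hWgne
  -- orders of F, σF, G, σG
  have hσFlow : ∀ n < -(p : ℤ), (LaurentSeries.conjRoot η F).coeff n = 0 := fun n hn => by
    rw [coeff_conjRoot, hFlow n hn, mul_zero]
  have hσFlead : (LaurentSeries.conjRoot η F).coeff (-(p : ℤ)) ≠ 0 := by
    rw [coeff_conjRoot]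
    exact mul_ne_zero (zpow_ne_zero _ hη0) hFlead
  have hσGlow : ∀ n < -(p : ℤ), (LaurentSeries.conjRoot η G).coeff n = 0 := fun n hn => by
    rw [coeff_conjRoot, hGlow n hn, mul_zero]
  have hσGlead : (LaurentSeries.conjRoot η G).coeff (-(p : ℤ)) ≠ 0 := by
    rw [coeff_conjRoot]
    exact mul_ne_zero (zpow_ne_zero _ hη0) hGlead
  have hordF : F.order = -(p : ℤ) := order_eq_of_coeffs hFlow hFlead
  have hordσF : (LaurentSeries.conjRoot η F).order = -(p : ℤ) :=
    order_eq_of_coeffs hσFlow hσFlead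
  have hordG : G.order = -(p : ℤ) := order_eq_of_coeffs hGlow hGlead
  have hordσG : (LaurentSeries.conjRoot η G).order = -(p : ℤ) :=
    order_eq_of_coeffs hσGlow hσGlead
  -- nonzero-ness
  have hFne : F ≠ 0 := fun h => hFlead (by rw [h, HahnSeries.coeff_zero])
  have hσFne : LaurentSeries.conjRoot η F ≠ 0 :=
    fun h => hσFlead (by rw [h, HahnSeries.coeff_zero])
  have hGne : G ≠ 0 := fun h => hGlead (by rw [h, HahnSeries.coeff_zero])
  have hσGne : LaurentSeries.conjRoot η G ≠ 0 :=
    fun h => hσGlead (by rw [h, HahnSeries.coeff_zero])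
  have hWfz : HahnSeries.ofPowerSeries ℤ K (Yf - PowerSeries.rescale η Yf) ≠ 0 :=
    fun h => hWf.2 (by rw [h, HahnSeries.coeff_zero])
  have hWgz : HahnSeries.ofPowerSeries ℤ K (Yg - PowerSeries.rescale η Yg) ≠ 0 :=
    fun h => hWg.2 (by rw [h, HahnSeries.coeff_zero])
  -- sandwich identities
  have hsandF : LaurentSeries.conjRoot η F - F =
      F * LaurentSeries.conjRoot η F *
        HahnSeries.ofPowerSeries ℤ K (Yf - PowerSeries.rescale η Yf) := by
    rw [map_sub]
    linear_combination (-(LaurentSeries.conjRoot η F)) * hFYf + F * hσF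
  have hsandG : LaurentSeries.conjRoot η G - G =
      G * LaurentSeries.conjRoot η G *
        HahnSeries.ofPowerSeries ℤ K (Yg - PowerSeries.rescale η Yg) := by
    rw [map_sub]
    linear_combination (-(LaurentSeries.conjRoot η G)) * hGYg + G * hσG
  -- order computation
  have horddF : (LaurentSeries.conjRoot η F - F).order = -(p : ℤ) + -(p : ℤ) + (μ : ℤ) := by
    rw [hsandF, HahnSeries.order_mul (mul_ne_zero hFne hσFne) hWfz,
      HahnSeries.order_mul hFne hσFne, hordF, hordσF, hWf.1]
  have horddG : (LaurentSeries.conjRoot η G - G).order = -(p : ℤ) + -(p : ℤ) + (μ : ℤ) := by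
    rw [hsandG, HahnSeries.order_mul (mul_ne_zero hGne hσGne) hWgz,
      HahnSeries.order_mul hGne hσGne, hordG, hordσG, hWg.1]
  -- the order of conjRoot η F - F is -b
  have hcoF : ∀ n : ℤ, (LaurentSeries.conjRoot η F - F).coeff n = (η ^ n - 1) * F.coeff n := by
    intro n
    rw [HahnSeries.coeff_sub, coeff_conjRoot]
    ring
  have hordb : (LaurentSeries.conjRoot η F - F).order = -(b : ℤ) := by
    refine order_eq_of_coeffs (fun n hn => ?_) ?_
    · rw [hcoF]
      by_cases hdvd : (D : ℤ) ∣ n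
      · rw [← hzpow] at hdvd
        rw [hdvd, sub_self, zero_mul]
      · have : F.coeff n = 0 := by
          by_contra hcon
          exact absurd (hmin n hcon hdvd) (not_le.mpr hn)
        rw [this, mul_zero]
    · rw [hcoF]
      refine mul_ne_zero ?_ hmem
      intro h
      rw [sub_eq_zero, hzpow, Int.dvd_neg] at h
      exact hb h
  -- conclude
  have hordGb : (LaurentSeries.conjRoot η G - G).order = -(b : ℤ) := by
    rw [horddG, ← horddF, hordb]
  have hdGne : LaurentSeries.conjRoot η G - G ≠ 0 := by
    rw [hsandG]
    exact mul_ne_zero (mul_ne_zero hGne hσGne) hWgz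
  have hcoG : ∀ n : ℤ, (LaurentSeries.conjRoot η G - G).coeff n = (η ^ n - 1) * G.coeff n := by
    intro n
    rw [HahnSeries.coeff_sub, coeff_conjRoot]
    ring
  constructor
  · have := mt HahnSeries.coeff_order_eq_zero.mp hdGne
    rw [hordGb, hcoG] at this
    intro h
    exact this (by rw [h, mul_zero])
  · intro i hi hdvd
    have hne : (LaurentSeries.conjRoot η G - G).coeff i ≠ 0 := by
      rw [hcoG]
      refine mul_ne_zero ?_ hi
      intro h
      rw [sub_eq_zero, hzpow] at h
      exact hdvd h
    have := HahnSeries.order_le_of_coeff_ne_zero hne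
    rwa [hordGb] at this

end FourierAux

/-- Suppose the irreducible `E_{f,q}` has dual Puiseux characteristic
`(q, p; β 1, …, β g)` with `p < q` (hence `p = β 1`).  The local Fourier transform
`F^{(∞,0)}(E_{f,q}) ≅ E_{g,q-p}` is encoded as follows: `F` is the expansion of `f` in
`t = x^{1/q}`, `G` that of `g` in `s = x₁^{1/(q-p)}` where `x₁ = x·f`, so that
`s^{q-p} = t^q·F(t)` under the change of parameter `s = S(t)`, and `1/g ∘ S = -1/f`
(the relation `g = -f` up to the irrelevant constant shift).  Then `E_{g,q-p}` has dual
Puiseux characteristic `(q-p, β 1; β 2, …, β g)` if `(q-p) ∣ β 1`, and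
`(q-p, β 1; β 1, …, β g)` otherwise. -/
theorem fourier_inf_zero_dualPuiseux {K : Type*} [Field K] [CharZero K] [IsAlgClosed K]
    (q p : ℕ) (hq : 0 < q) (hp : 0 < p)
    (F : LaurentSeries K)
    (hFlow : ∀ n : ℤ, n < -(p : ℤ) → F.coeff n = 0)
    (hFlead : F.coeff (-(p : ℤ)) ≠ 0)
    (hFirr : RamIrred q q F)
    (g : ℕ) (hg : 0 < g) (β e : ℕ → ℕ)
    (hchar : DualChar q (fun n => F.coeff n ≠ 0) g β e)
    (G : LaurentSeries K) (hG : G ≠ 0)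
    (Yf Yg : PowerSeries K)
    (hYf : (HahnSeries.ofPowerSeries ℤ K Yf : LaurentSeries K) * F = 1)
    (hYg : (HahnSeries.ofPowerSeries ℤ K Yg : LaurentSeries K) * G = 1)
    (S : PowerSeries K)
    (hS0 : PowerSeries.constantCoeff S = 0)
    (hS1 : PowerSeries.coeff 1 S ≠ 0)
    (hpq : p < q)
    (hSpow : (HahnSeries.ofPowerSeries ℤ K S : LaurentSeries K) ^ (q - p) =
      HahnSeries.single (q : ℤ) (1 : K) * F)
    (hcomp : Composed S Yg (-Yf)) :
    G.order = -(β 1 : ℤ) ∧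
    ((q - p) ∣ β 1 →
      ∃ e' : ℕ → ℕ, DualChar (q - p) (fun n => G.coeff n ≠ 0) (g - 1)
        (fun k => β (k + 1)) e') ∧
    (¬ (q - p) ∣ β 1 →
      ∃ e' : ℕ → ℕ, DualChar (q - p) (fun n => G.coeff n ≠ 0) g β e') := by
  classical
  obtain ⟨he0, heg, hlev⟩ := hchar
  obtain ⟨hm1, hd1, hmin1, hgcd1⟩ := hlev 0 hg
  -- basic facts about F
  have hFne : F ≠ 0 := fun h => hFlead (by rw [h, HahnSeries.coeff_zero])
  have hordF : F.order = -(p : ℤ) := FourierAux.order_eq_of_coeffs hFlow hFlead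
  have hYf' : (HahnSeries.ofPowerSeries ℤ K Yf) ≠ 0 := by
    intro h
    rw [h, zero_mul] at hYf
    exact zero_ne_one hYf
  have hordYf : (HahnSeries.ofPowerSeries ℤ K Yf).order = (p : ℤ) := by
    have h := HahnSeries.order_mul hYf' hFne
    rw [hYf, HahnSeries.order_one, hordF] at h
    omega
  have hYflt : ∀ k < p, PowerSeries.coeff k Yf = 0 := by
    intro k hk
    have h := HahnSeries.coeff_eq_zero_of_lt_order
      (x := HahnSeries.ofPowerSeries ℤ K Yf) (i := (k : ℤ))
      (by rw [hordYf]; exact_mod_cast hk)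
    rwa [HahnSeries.ofPowerSeries_apply_coeff] at h
  have hleadYfF : PowerSeries.coeff p Yf * F.coeff (-(p : ℤ)) = 1 := by
    have h := HahnSeries.coeff_mul_order_add_order (HahnSeries.ofPowerSeries ℤ K Yf) F
    rw [hYf, hordYf, hordF, show (p : ℤ) + -(p : ℤ) = 0 by ring, HahnSeries.coeff_one,
      if_pos rfl, HahnSeries.leadingCoeff_eq, HahnSeries.leadingCoeff_eq, hordYf, hordF,
      HahnSeries.ofPowerSeries_apply_coeff] at h
    exact h.symm
  have hYfp : PowerSeries.coeff p Yf ≠ 0 := left_ne_zero_of_mul_eq_one hleadYfF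
  -- the power series equation Yf * S^(q-p) = X^q
  have hXq : Yf * S ^ (q - p) = PowerSeries.X ^ q := by
    apply HahnSeries.ofPowerSeries_injective (Γ := ℤ)
    rw [map_mul, map_pow, hSpow, map_pow, HahnSeries.ofPowerSeries_X, HahnSeries.single_pow]
    calc (HahnSeries.ofPowerSeries ℤ K) Yf * (HahnSeries.single (q : ℤ) (1 : K) * F)
        = HahnSeries.single (q : ℤ) (1 : K) * ((HahnSeries.ofPowerSeries ℤ K) Yf * F) := by
          ring
      _ = HahnSeries.single (q • (1 : ℤ)) ((1 : K) ^ q) := by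
          rw [hYf, mul_one, nsmul_eq_mul, mul_one, one_pow]
  -- the composition equation
  have hT : FourierAux.pcomp S Yg = -Yf := by
    ext n
    rw [FourierAux.coeff_pcomp]
    exact (hcomp n).symm
  have hS0' : PowerSeries.coeff 0 S = 0 := by
    rwa [PowerSeries.coeff_zero_eq_constantCoeff]
  -- facts about Yg
  have hYglow := FourierAux.pcomp_low (S := S) (Y := Yg) hS0' (m := p)
    (fun k hk => by rw [hT, map_neg, hYflt k hk, neg_zero]) hS1
  have hYglt : ∀ k < p, PowerSeries.coeff k Yg = 0 := hYglow.1
  have hYgp : PowerSeries.coeff p Yg ≠ 0 := by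
    intro h
    have h2 := hYglow.2
    rw [h, zero_mul, hT, map_neg] at h2
    exact hYfp (by rw [← neg_eq_zero]; exact h2.symm)
  -- facts about G
  have hYg' : (HahnSeries.ofPowerSeries ℤ K Yg) ≠ 0 := by
    intro h
    rw [h, zero_mul] at hYg
    exact zero_ne_one hYg
  have hGne : G ≠ 0 := hG
  have hordYg : (HahnSeries.ofPowerSeries ℤ K Yg).order = (p : ℤ) :=
    (FourierAux.ofPS_order hYglt hYgp).1
  have hordG : G.order = -(p : ℤ) := by
    have h := HahnSeries.order_mul hYg' hGne
    rw [hYg, HahnSeries.order_one, hordYg] at h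
    omega
  have hGlow : ∀ n < -(p : ℤ), G.coeff n = 0 := fun n hn =>
    HahnSeries.coeff_eq_zero_of_lt_order (by rw [hordG]; exact hn)
  have hGlead : G.coeff (-(p : ℤ)) ≠ 0 := by
    have h := HahnSeries.coeff_mul_order_add_order (HahnSeries.ofPowerSeries ℤ K Yg) G
    rw [hYg, hordYg, hordG, show (p : ℤ) + -(p : ℤ) = 0 by ring, HahnSeries.coeff_one,
      if_pos rfl, HahnSeries.leadingCoeff_eq, HahnSeries.leadingCoeff_eq, hordYg, hordG] at h
    exact right_ne_zero_of_mul_eq_one h.symm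
  -- β 1 = p
  have hqnp : ¬ ((q : ℤ) ∣ -(p : ℤ)) := by
    intro h
    rw [Int.dvd_neg, Int.natCast_dvd_natCast] at h
    exact absurd (Nat.le_of_dvd hp h) (not_le.mpr hpq)
  have hβ1 : β 1 = p := by
    have h1 : -(p : ℤ) ≤ -(β 1 : ℤ) := by
      rw [← hordF]
      exact HahnSeries.order_le_of_coeff_ne_zero hm1
    have h2 : -(β 1 : ℤ) ≤ -(p : ℤ) := hmin1 (-(p : ℤ)) hFlead (by rwa [he0])
    omega
  -- commuted unit equations
  have hFYf : F * HahnSeries.ofPowerSeries ℤ K Yf = 1 := by rw [mul_comm]; exact hYf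
  have hGYg : G * HahnSeries.ofPowerSeries ℤ K Yg = 1 := by rw [mul_comm]; exact hYg
  -- positivity and divisibility chains for e
  have hepos : ∀ k, k ≤ g → 0 < e k := by
    intro k
    induction k with
    | zero => intro _; rw [he0]; exact hq
    | succ k ih =>
      intro hk
      have hlt : k < g := by omega
      rw [(hlev k hlt).2.2.2]
      exact Nat.gcd_pos_of_pos_left _ (ih (by omega))
  have hchain : ∀ k, k < g → e (k + 1) ∣ e k := fun k hk => by
    rw [(hlev k hk).2.2.2]
    exact Nat.gcd_dvd_left _ _
  have hdvd1 : ∀ k, 1 ≤ k → k ≤ g → e k ∣ e 1 := by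
    intro k
    induction k with
    | zero => intro h; omega
    | succ k ih =>
      intro _ hk
      rcases Nat.eq_or_lt_of_le (show 1 ≤ k + 1 from by omega) with h | h
      · rw [← h]
      · exact dvd_trans (hchain k (by omega)) (ih (by omega) (by omega))
  have he1p : e 1 ∣ p := by
    rw [hgcd1, hβ1]
    exact Nat.gcd_dvd_right _ _
  have hekp : ∀ k, 1 ≤ k → k ≤ g → e k ∣ p := fun k h1 h2 =>
    dvd_trans (hdvd1 k h1 h2) he1p
  -- auxiliary gcd facts
  have hgcdswap : Nat.gcd (q - p) p = Nat.gcd q p := by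
    apply Nat.dvd_antisymm
    · refine Nat.dvd_gcd ?_ (Nat.gcd_dvd_right _ _)
      have h := Nat.dvd_add (Nat.gcd_dvd_left (q - p) p) (Nat.gcd_dvd_right (q - p) p)
      rwa [Nat.sub_add_cancel hpq.le] at h
    · exact Nat.dvd_gcd (Nat.dvd_sub (Nat.gcd_dvd_left _ _) (Nat.gcd_dvd_right _ _))
        (Nat.gcd_dvd_right _ _)
  -- the "level" machinery, specialized
  have hlevel : ∀ D : ℕ, 0 < D → D ∣ p → ∀ b : ℕ, ¬ ((D : ℤ) ∣ (b : ℤ)) →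
      F.coeff (-(b : ℤ)) ≠ 0 →
      (∀ i : ℤ, F.coeff i ≠ 0 → ¬ ((D : ℤ) ∣ i) → -(b : ℤ) ≤ i) →
      G.coeff (-(b : ℤ)) ≠ 0 ∧
        ∀ i : ℤ, G.coeff i ≠ 0 → ¬ ((D : ℤ) ∣ i) → -(b : ℤ) ≤ i := by
    intro D hD hDp b hb hmem hmin
    exact FourierAux.level p q hp hpq S Yf Yg hS0' hS1 hXq hYflt hYfp hT hYglt hYgp F G
      hFYf hGYg hFlow hFlead hGlow hGlead D hD hDp b hb hmem hmin
  refine ⟨by rw [hβ1]; exact hordG, ?_, ?_⟩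
  · -- divisible case
    intro hdiv
    refine ⟨fun k => e (k + 1), ?_, ?_, ?_⟩
    · -- e 1 = q - p
      have hdivp : (q - p) ∣ p := by rwa [hβ1] at hdiv
      have hqp_q : (q - p) ∣ q := by
        have h := Nat.dvd_add (dvd_refl (q - p)) hdivp
        rwa [Nat.sub_add_cancel hpq.le] at h
      have hgqp : Nat.gcd q p = q - p := by
        apply Nat.dvd_antisymm
        · exact Nat.dvd_sub (Nat.gcd_dvd_left _ _) (Nat.gcd_dvd_right _ _)
        · exact Nat.dvd_gcd hqp_q hdivp
      show e 1 = q - p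
      rw [hgcd1, he0, hβ1, hgqp]
    · show e (g - 1 + 1) = 1
      rw [Nat.sub_add_cancel hg]
      exact heg
    · intro k hk
      have hk1 : k + 1 < g := by omega
      obtain ⟨hm, hd, hmn, hgc⟩ := hlev (k + 1) hk1
      have hres := hlevel (e (k + 1)) (hepos (k + 1) (by omega))
        (hekp (k + 1) (by omega) (by omega)) (β (k + 2))
        hd hm hmn
      exact ⟨hres.1, hd, hres.2, hgc⟩
  · -- non-divisible case
    intro hdiv
    refine ⟨fun k => if k = 0 then q - p else e k, ?_, ?_, ?_⟩
    · show (if (0 : ℕ) = 0 then q - p else e 0) = q - p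
      rw [if_pos rfl]
    · show (if g = 0 then q - p else e g) = 1
      rw [if_neg hg.ne']
      exact heg
    · intro k hk
      rcases Nat.eq_zero_or_pos k with hk0 | hk0
      · subst hk0
        refine ⟨?_, ?_, ?_, ?_⟩
        · show G.coeff (-(β 1 : ℤ)) ≠ 0
          rw [hβ1]
          exact hGlead
        · show ¬ (((q - p : ℕ) : ℤ) ∣ (β 1 : ℤ))
          intro h
          rw [Int.natCast_dvd_natCast] at h
          exact hdiv h
        · show ∀ i : ℤ, G.coeff i ≠ 0 → ¬ (((q - p : ℕ) : ℤ) ∣ i) → -(β 1 : ℤ) ≤ i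
          intro i hi _
          rw [hβ1]
          by_contra hlt
          push_neg at hlt
          exact hi (hGlow i hlt)
        · show e 1 = Nat.gcd (q - p) (β 1)
          rw [hgcd1, he0, hβ1, hgcdswap]
      · have hkne : k ≠ 0 := hk0.ne'
        obtain ⟨hm, hd, hmn, hgc⟩ := hlev k hk
        have hres := hlevel (e k) (hepos k (by omega))
          (hekp k (by omega) (by omega)) (β (k + 1)) hd hm hmn
        refine ⟨hres.1, ?_, ?_, ?_⟩
        · show ¬ (((if k = 0 then q - p else e k : ℕ) : ℤ) ∣ (β (k + 1) : ℤ))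
          rw [if_neg hkne]
          exact hd
        · show ∀ i : ℤ, G.coeff i ≠ 0 →
            ¬ (((if k = 0 then q - p else e k : ℕ) : ℤ) ∣ i) → -(β (k + 1) : ℤ) ≤ i
          intro i hi hdvd
          rw [if_neg hkne] at hdvd
          exact hres.2 i hi hdvd
        · show (if k + 1 = 0 then q - p else e (k + 1)) =
            Nat.gcd (if k = 0 then q - p else e k) (β (k + 1))
          rw [if_neg hkne, if_neg (Nat.succ_ne_zero k)]
          exact hgc
end
end

section
/- Suppose an irreducible E_{f,q} has dual Puiseux characteristic (q, p; β₁, …, β_g). Then F^{(0,∞)}(E_{f,q}) ≅ E_{g,p+q} has dual Puiseux characteristic (p+q, β₁; β₁, …, β_g) if p = β₁, and (p+q, p; p, β₁, …, β_g) otherwise. -/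
namespace LFAux

variable {K : Type*} [Field K]

lemma ofPS_coeff_neg (W : PowerSeries K) {n : ℤ} (hn : n < 0) :
    (HahnSeries.ofPowerSeries ℤ K W).coeff n = 0 := by
  rw [HahnSeries.ofPowerSeries_apply, HahnSeries.embDomain_of_notMem_range]
  rintro ⟨m, hm⟩
  change ((m : ℕ) : ℤ) = n at hm
  omega

lemma ofPS_coeff_nonneg (W : PowerSeries K) {n : ℤ}
    (h : (HahnSeries.ofPowerSeries ℤ K W).coeff n ≠ 0) : 0 ≤ n := by
  by_contra hc
  exact h (ofPS_coeff_neg W (by omega))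

lemma laurent_mul_coeff_eq_sum (X Y : LaurentSeries K) (n : ℤ) (T : Finset ℤ)
    (hT : ∀ x : ℤ, X.coeff x ≠ 0 → Y.coeff (n - x) ≠ 0 → x ∈ T) :
    (X * Y).coeff n = ∑ x ∈ T, X.coeff x * Y.coeff (n - x) := by
  classical
  rw [HahnSeries.coeff_mul]
  rw [← Finset.sum_filter_ne_zero (s := T)]
  rw [← Finset.sum_filter_ne_zero
    (s := Finset.antidiagonal X.isPWO_support Y.isPWO_support n)]
  apply Finset.sum_bij (i := fun ij _ => ij.1)
  · rintro ⟨x, y⟩ hmem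
    simp only [Finset.mem_filter, Finset.mem_addAntidiagonal] at hmem
    obtain ⟨⟨hx, hy, hxy⟩, hne⟩ := hmem
    have hyx : y = n - x := by omega
    subst hyx
    simp only [Finset.mem_filter]
    exact ⟨hT x (left_ne_zero_of_mul hne) (right_ne_zero_of_mul hne), hne⟩
  · rintro ⟨x1, y1⟩ h1 ⟨x2, y2⟩ h2 hx
    simp only [Finset.mem_filter, Finset.mem_addAntidiagonal] at h1 h2
    simp only at hx
    have : y1 = y2 := by omega
    simp [hx, this]
  · intro x hx
    simp only [Finset.mem_filter] at hx
    refine ⟨⟨x, n - x⟩, ?_, rfl⟩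
    simp only [Finset.mem_filter, Finset.mem_addAntidiagonal, HahnSeries.mem_support]
    exact ⟨⟨left_ne_zero_of_mul hx.2, right_ne_zero_of_mul hx.2, by ring⟩, hx.2⟩
  · rintro ⟨x, y⟩ hmem
    simp only [Finset.mem_filter, Finset.mem_addAntidiagonal] at hmem
    have : y = n - x := by omega
    simp [this]

lemma ps_mul_coeff_eq_sum (X Y : PowerSeries K) (n : ℕ) (T : Finset ℕ)
    (hTn : T ⊆ Finset.range (n + 1))
    (hT : ∀ x : ℕ, x ≤ n → PowerSeries.coeff x X ≠ 0 →
      PowerSeries.coeff (n - x) Y ≠ 0 → x ∈ T) :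
    PowerSeries.coeff n (X * Y) =
      ∑ x ∈ T, PowerSeries.coeff x X * PowerSeries.coeff (n - x) Y := by
  rw [PowerSeries.coeff_mul, Finset.Nat.sum_antidiagonal_eq_sum_range_succ_mk]
  symm
  apply Finset.sum_subset hTn
  intro x hx hxT
  rcases eq_or_ne (PowerSeries.coeff x X) 0 with h | h
  · simp [h]
  rcases eq_or_ne (PowerSeries.coeff (n - x) Y) 0 with h' | h'
  · simp [h']
  exact absurd (hT x (by simp at hx; omega) h h') hxT

/-- support of `X` is contained in `dℤ ∪ [V,∞)`. -/
def MG (d V : ℕ) (X : PowerSeries K) : Prop :=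
  ∀ n : ℕ, PowerSeries.coeff n X ≠ 0 → d ∣ n ∨ V ≤ n

lemma MG.mul {d V : ℕ} {X Y : PowerSeries K} (hX : MG d V X) (hY : MG d V Y) :
    MG d V (X * Y) := by
  intro n hn
  rw [PowerSeries.coeff_mul] at hn
  obtain ⟨ij, hij, hne⟩ := Finset.exists_ne_zero_of_sum_ne_zero hn
  rw [Finset.HasAntidiagonal.mem_antidiagonal] at hij
  rcases hX ij.1 (left_ne_zero_of_mul hne) with h1 | h1
  · rcases hY ij.2 (right_ne_zero_of_mul hne) with h2 | h2
    · left; rw [← hij]; exact dvd_add h1 h2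
    · right; omega
  · right; omega

lemma MG.one (d V : ℕ) : MG d V (1 : PowerSeries K) := by
  intro n hn
  rw [PowerSeries.coeff_one] at hn
  left
  simp only [ne_eq, ite_eq_right_iff, not_forall] at hn
  simp [hn.1]

lemma MG.pow {d V : ℕ} {X : PowerSeries K} (hX : MG d V X) (m : ℕ) : MG d V (X ^ m) := by
  induction m with
  | zero => simpa using MG.one d V
  | succ m ih => rw [pow_succ]; exact ih.mul hX


/-- root extraction preserves `MG` (char 0). -/
lemma MG.of_pow [CharZero K] {d V m : ℕ} (hm : 0 < m) {u : PowerSeries K}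
    (hu0 : PowerSeries.constantCoeff u ≠ 0) (h : MG d V (u ^ m)) : MG d V u := by
  classical
  intro n₀ hn₀
  by_contra hbad0
  push_neg at hbad0
  have hex : ∃ n : ℕ, ¬ d ∣ n ∧ n < V ∧ PowerSeries.coeff n u ≠ 0 :=
    ⟨n₀, hbad0.1, by omega, hn₀⟩
  clear hn₀ hbad0 n₀
  obtain ⟨hNd, hNV, hNne⟩ : ¬ d ∣ (Nat.find hex) ∧ (Nat.find hex) < V ∧
      PowerSeries.coeff (Nat.find hex) u ≠ 0 := Nat.find_spec hex
  set N := Nat.find hex with hNdef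
  have hmin : ∀ j, j < N → ¬ d ∣ j → j < V → PowerSeries.coeff j u = 0 := by
    intro j hj hjd hjV
    by_contra hc
    exact Nat.find_min hex hj ⟨hjd, hjV, hc⟩
  have hN0 : N ≠ 0 := by intro h0; rw [h0] at hNd; exact hNd (dvd_zero d)
  obtain ⟨M, hM⟩ : ∃ M, N = M + 1 := ⟨N - 1, by omega⟩
  have hpow1 : u ^ (m - 1) * u = u ^ m := by
    rw [← pow_succ]
    congr 1
    omega
  have hder : (PowerSeries.derivative K (u ^ m)) * u
      = m • (u ^ m * PowerSeries.derivative K u) := by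
    rw [Derivation.leibniz_pow, smul_mul_assoc]
    congr 1
    rw [smul_eq_mul, mul_right_comm, hpow1]
  have hL : PowerSeries.coeff M ((PowerSeries.derivative K (u ^ m)) * u) = 0 := by
    rw [ps_mul_coeff_eq_sum _ _ M ∅ (by simp) ?_, Finset.sum_empty]
    intro x hx h1 h2
    exfalso
    rw [PowerSeries.coeff_derivative] at h1
    have h1' : PowerSeries.coeff (x + 1) (u ^ m) ≠ 0 := left_ne_zero_of_mul h1
    have hdx : d ∣ (x + 1) := by
      rcases h (x + 1) h1' with hh | hh
      · exact hh
      · omega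
    have hbad : ¬ d ∣ (M - x) := by
      intro hc
      have : d ∣ N := by
        rw [hM]
        have : M + 1 = (M - x) + (x + 1) := by omega
        rw [this]
        exact dvd_add hc hdx
      exact hNd this
    exact h2 (hmin (M - x) (by omega) hbad (by omega))
  have hR : PowerSeries.coeff M (u ^ m * PowerSeries.derivative K u)
      = (PowerSeries.constantCoeff u) ^ m * (PowerSeries.coeff (M + 1) u * (M + 1)) := by
    rw [ps_mul_coeff_eq_sum _ _ M {0} (by simp) ?_]
    · rw [Finset.sum_singleton, Nat.sub_zero, PowerSeries.coeff_derivative,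
        PowerSeries.coeff_zero_eq_constantCoeff, map_pow]
    · intro x hx h1 h2
      simp only [Finset.mem_singleton]
      by_contra hx0
      have hdx : d ∣ x := by
        rcases h x h1 with hh | hh
        · exact hh
        · omega
      rw [PowerSeries.coeff_derivative] at h2
      have h2' : PowerSeries.coeff (M - x + 1) u ≠ 0 := left_ne_zero_of_mul h2
      have heq : M - x + 1 = N - x := by omega
      have hbad : ¬ d ∣ (N - x) := by
        intro hc
        apply hNd
        have : N = (N - x) + x := by omega
        rw [this]
        exact dvd_add hc hdx
      rw [heq] at h2'
      exact h2' (hmin (N - x) (by omega) hbad (by omega))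
  rw [hder, map_nsmul, hR, nsmul_eq_mul] at hL
  rw [← hM] at hL
  have h1 : (m : K) ≠ 0 := Nat.cast_ne_zero.mpr hm.ne'
  have h2 : ((PowerSeries.constantCoeff) u) ^ m ≠ 0 := pow_ne_zero m hu0
  have h3 : ((M : K) + 1) ≠ 0 := by
    have := Nat.cast_ne_zero (R := K).mpr (show M + 1 ≠ 0 by omega)
    push_cast at this
    exact this
  rcases mul_eq_zero.mp hL with hc | hc
  · exact h1 hc
  rcases mul_eq_zero.mp hc with hc' | hc'
  · exact h2 hc'
  rcases mul_eq_zero.mp hc' with hc'' | hc''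
  · exact hNne hc''
  · exact h3 hc''

lemma MG.coeff_V_pow {d V : ℕ} (hdV : ¬ d ∣ V) {u : PowerSeries K}
    (hu : MG d V u) (m : ℕ) :
    PowerSeries.coeff V (u ^ m) =
      (m : K) * (PowerSeries.constantCoeff u) ^ (m - 1) * PowerSeries.coeff V u := by
  have hV0 : V ≠ 0 := fun h => hdV (h ▸ dvd_zero d)
  induction m with
  | zero => simp [PowerSeries.coeff_one, hV0]
  | succ m ih =>
    rw [pow_succ, ps_mul_coeff_eq_sum _ _ V {0, V} ?_ ?_]
    · rw [Finset.sum_insert (by simpa using (Ne.symm hV0)), Finset.sum_singleton]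
      simp only [Nat.sub_zero, Nat.sub_self, PowerSeries.coeff_zero_eq_constantCoeff,
        map_pow, ih]
      rcases Nat.eq_zero_or_pos m with hm0 | hm0
      · subst hm0; simp
      · have hcc : (PowerSeries.constantCoeff u) ^ (m - 1) * PowerSeries.constantCoeff u
            = (PowerSeries.constantCoeff u) ^ m := by
          rw [← pow_succ]
          congr 1
          omega
        rw [Nat.add_sub_cancel]
        push_cast
        rw [show (m : K) * (PowerSeries.constantCoeff u) ^ (m - 1) *
            PowerSeries.coeff V u * PowerSeries.constantCoeff u
            = (m : K) * ((PowerSeries.constantCoeff u) ^ (m - 1) *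
              PowerSeries.constantCoeff u) * PowerSeries.coeff V u by ring, hcc]
        ring
    · intro x hx
      simp only [Finset.mem_insert, Finset.mem_singleton, Finset.mem_range] at hx ⊢
      omega
    · intro x hxle h1 h2
      simp only [Finset.mem_insert, Finset.mem_singleton]
      by_contra hx
      push_neg at hx
      have hdx : d ∣ x := by
        rcases hu.pow m x h1 with hh | hh
        · exact hh
        · omega
      have hbad : ¬ d ∣ (V - x) := by
        intro hc
        apply hdV
        have : V = (V - x) + x := by omega
        rw [this]
        exact dvd_add hc hdx
      rcases hu (V - x) h2 with hh | hh
      · exact hbad hh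
      · omega


lemma yf_low (p : ℕ) (F : LaurentSeries K) (Yf : PowerSeries K)
    (hYf : (HahnSeries.ofPowerSeries ℤ K Yf : LaurentSeries K) * F = 1)
    (hFlow : ∀ n : ℤ, n < -(p : ℤ) → F.coeff n = 0)
    (hFlead : F.coeff (-(p : ℤ)) ≠ 0) :
    (∀ j : ℤ, j < (p : ℤ) → (HahnSeries.ofPowerSeries ℤ K Yf).coeff j = 0) ∧
      PowerSeries.coeff p Yf * F.coeff (-(p : ℤ)) = 1 := by
  have H1nat : ∀ n : ℕ, (n : ℤ) < p → PowerSeries.coeff n Yf = 0 := by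
    intro n
    induction n using Nat.strong_induction_on with
    | _ n IH =>
      intro hn
      have h0 : ((HahnSeries.ofPowerSeries ℤ K Yf) * F).coeff ((n : ℤ) - p) = 0 := by
        rw [hYf, HahnSeries.coeff_one, if_neg (by omega)]
      rw [laurent_mul_coeff_eq_sum _ _ _ {(n : ℤ)} ?_] at h0
      · rw [Finset.sum_singleton, show (n : ℤ) - ↑p - ↑n = -(p : ℤ) by ring,
          HahnSeries.ofPowerSeries_apply_coeff] at h0
        exact (mul_eq_zero.mp h0).resolve_right hFlead
      · intro x hx hFx
        have hx0 : 0 ≤ x := ofPS_coeff_nonneg _ hx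
        lift x to ℕ using hx0
        rw [HahnSeries.ofPowerSeries_apply_coeff] at hx
        have hxle : (x : ℤ) ≤ n := by
          by_contra hgt
          push_neg at hgt
          exact hFx (hFlow _ (by omega))
        have hxn : x = n := by
          by_contra hne
          exact hx (IH x (by omega) (by omega))
        simp [hxn]
  have H1 : ∀ j : ℤ, j < (p : ℤ) → (HahnSeries.ofPowerSeries ℤ K Yf).coeff j = 0 := by
    intro j hj
    rcases lt_or_ge j 0 with h | h
    · exact ofPS_coeff_neg _ h
    · lift j to ℕ using h
      rw [HahnSeries.ofPowerSeries_apply_coeff]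
      exact H1nat j (by omega)
  refine ⟨H1, ?_⟩
  have h0 : ((HahnSeries.ofPowerSeries ℤ K Yf) * F).coeff 0 = 1 := by
    rw [hYf, HahnSeries.coeff_one, if_pos rfl]
  rw [laurent_mul_coeff_eq_sum _ _ _ {(p : ℤ)} ?_] at h0
  · rw [Finset.sum_singleton, show (0 : ℤ) - ↑p = -(p : ℤ) by ring,
      HahnSeries.ofPowerSeries_apply_coeff] at h0
    exact h0
  · intro x hx hFx
    have hx0 : 0 ≤ x := ofPS_coeff_nonneg _ hx
    have hxge : ¬ x < (p : ℤ) := fun hc => hx (H1 x hc)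
    have hxle : x ≤ (p : ℤ) := by
      by_contra hgt
      push_neg at hgt
      exact hFx (hFlow _ (by omega))
    simp only [Finset.mem_singleton]
    omega

lemma yg_low (p : ℕ) (S Yf Yg : PowerSeries K)
    (hS0 : PowerSeries.constantCoeff S = 0)
    (hS1 : PowerSeries.coeff 1 S ≠ 0)
    (hcomp : Composed S Yg Yf)
    (hYflow : ∀ j : ℕ, (j : ℤ) < (p : ℤ) → PowerSeries.coeff j Yf = 0) :
    (∀ j : ℕ, j < p → PowerSeries.coeff j Yg = 0) ∧
      (PowerSeries.coeff 1 S) ^ p * PowerSeries.coeff p Yg = PowerSeries.coeff p Yf := by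
  obtain ⟨u, hu⟩ : (PowerSeries.X : PowerSeries K) ∣ S := PowerSeries.X_dvd_iff.mpr hS0
  have hSk : ∀ k n : ℕ, PowerSeries.coeff n (S ^ k)
      = if k ≤ n then PowerSeries.coeff (n - k) (u ^ k) else 0 := by
    intro k n
    rw [hu, mul_pow, mul_comm ((PowerSeries.X : PowerSeries K) ^ k),
      PowerSeries.coeff_mul_X_pow']
  have hc1 : PowerSeries.coeff 1 S = PowerSeries.constantCoeff u := by
    rw [hu, PowerSeries.coeff_succ_X_mul, PowerSeries.coeff_zero_eq_constantCoeff]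
  have hSdiag : ∀ k : ℕ, PowerSeries.coeff k (S ^ k) = (PowerSeries.coeff 1 S) ^ k := by
    intro k
    rw [hSk, if_pos le_rfl, Nat.sub_self, PowerSeries.coeff_zero_eq_constantCoeff, map_pow, hc1]
  have H5 : ∀ j : ℕ, j < p → PowerSeries.coeff j Yg = 0 := by
    intro j
    induction j using Nat.strong_induction_on with
    | _ j IH =>
      intro hj
      have h0 := hcomp j
      rw [Finset.sum_eq_single j ?_ (by intro h; simp at h)] at h0
      · rw [hSdiag] at h0
        have hYfj : PowerSeries.coeff j Yf = 0 := hYflow j (by omega)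
        rw [hYfj] at h0
        exact (mul_eq_zero.mp h0.symm).resolve_right (pow_ne_zero _ hS1)
      · intro k hk hkj
        rw [IH k (by simp at hk; omega) (by simp at hk; omega), zero_mul]
  refine ⟨H5, ?_⟩
  have h0 := hcomp p
  rw [Finset.sum_eq_single p ?_ (by intro h; simp at h)] at h0
  · rw [hSdiag] at h0
    rw [h0]
    ring
  · intro k hk hkj
    rw [H5 k (by simp at hk; omega), zero_mul]

lemma g_order (p : ℕ) (G : LaurentSeries K) (Yg : PowerSeries K)
    (hYg : (HahnSeries.ofPowerSeries ℤ K Yg : LaurentSeries K) * G = 1)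
    (hYglow : ∀ j : ℕ, j < p → PowerSeries.coeff j Yg = 0)
    (hYgp : PowerSeries.coeff p Yg ≠ 0) :
    (∀ i : ℤ, i < -(p : ℤ) → G.coeff i = 0) ∧
      PowerSeries.coeff p Yg * G.coeff (-(p : ℤ)) = 1 := by
  have hGne : G ≠ 0 := by
    intro h
    rw [h, mul_zero] at hYg
    exact zero_ne_one hYg
  have hYgLlow : ∀ x : ℤ, (HahnSeries.ofPowerSeries ℤ K Yg).coeff x ≠ 0 → (p : ℤ) ≤ x := by
    intro x hx
    have hx0 : 0 ≤ x := ofPS_coeff_nonneg _ hx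
    lift x to ℕ using hx0
    rw [HahnSeries.ofPowerSeries_apply_coeff] at hx
    by_contra hc
    exact hx (hYglow x (by omega))
  have horder : G.order = -(p : ℤ) := by
    have h0 : ((HahnSeries.ofPowerSeries ℤ K Yg) * G).coeff ((p : ℤ) + G.order) ≠ 0 := by
      rw [laurent_mul_coeff_eq_sum _ _ _ {(p : ℤ)} ?_]
      · rw [Finset.sum_singleton, show (p : ℤ) + G.order - ↑p = G.order by ring,
          HahnSeries.ofPowerSeries_apply_coeff]
        exact mul_ne_zero hYgp (mt HahnSeries.coeff_order_eq_zero.mp hGne)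
      · intro x hx hGx
        have h1 : (p : ℤ) ≤ x := hYgLlow x hx
        have h2 : G.order ≤ (p : ℤ) + G.order - x := HahnSeries.order_le_of_coeff_ne_zero hGx
        simp only [Finset.mem_singleton]
        omega
    rw [hYg, HahnSeries.coeff_one] at h0
    split at h0
    · omega
    · exact absurd rfl h0
  constructor
  · intro i hi
    exact HahnSeries.coeff_eq_zero_of_lt_order (by rw [horder]; omega)
  · have h0 : ((HahnSeries.ofPowerSeries ℤ K Yg) * G).coeff 0 = 1 := by
      rw [hYg, HahnSeries.coeff_one, if_pos rfl]
    rw [laurent_mul_coeff_eq_sum _ _ _ {(p : ℤ)} ?_] at h0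
    · rw [Finset.sum_singleton, show (0 : ℤ) - ↑p = -(p : ℤ) by ring,
        HahnSeries.ofPowerSeries_apply_coeff] at h0
      exact h0
    · intro x hx hGx
      have h1 : (p : ℤ) ≤ x := hYgLlow x hx
      have h2 : G.order ≤ 0 - x := HahnSeries.order_le_of_coeff_ne_zero hGx
      rw [horder] at h2
      simp only [Finset.mem_singleton]
      omega

set_option maxHeartbeats 2000000 in
lemma transfer [CharZero K] (q p : ℕ) (hq : 0 < q) (hp : 0 < p)
    (F : LaurentSeries K)
    (hFlow : ∀ n : ℤ, n < -(p : ℤ) → F.coeff n = 0)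
    (hFlead : F.coeff (-(p : ℤ)) ≠ 0)
    (G : LaurentSeries K)
    (Yf Yg : PowerSeries K)
    (hYf : (HahnSeries.ofPowerSeries ℤ K Yf : LaurentSeries K) * F = 1)
    (hYg : (HahnSeries.ofPowerSeries ℤ K Yg : LaurentSeries K) * G = 1)
    (S : PowerSeries K)
    (hS0 : PowerSeries.constantCoeff S = 0)
    (hS1 : PowerSeries.coeff 1 S ≠ 0)
    (hSpow : (HahnSeries.ofPowerSeries ℤ K S : LaurentSeries K) ^ (p + q) * F =
      -(HahnSeries.single (q : ℤ) (1 : K)))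
    (hcomp : Composed S Yg Yf)
    (d β : ℕ) (hdp : d ∣ p) (hdβ : ¬ d ∣ β) (hβp : β < p)
    (hν : ∀ i : ℤ, F.coeff i ≠ 0 → ¬ ((d : ℤ) ∣ i) → -(β : ℤ) ≤ i)
    (hb : F.coeff (-(β : ℤ)) ≠ 0) :
    (∀ i : ℤ, G.coeff i ≠ 0 → ¬ ((d : ℤ) ∣ i) → -(β : ℤ) ≤ i) ∧
      G.coeff (-(β : ℤ)) ≠ 0 := by
  classical
  set a := F.coeff (-(p : ℤ)) with ha_def
  set b := F.coeff (-(β : ℤ)) with hb_def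
  set c := PowerSeries.coeff 1 S with hc_def
  -- numerics
  set V := p - β with hV_def
  set J := p + V with hJ_def
  have hVβ : β + V = p := by omega
  have hV0 : 0 < V := by omega
  have hdpZ : (d : ℤ) ∣ (p : ℤ) := Int.natCast_dvd_natCast.mpr hdp
  have hdV : ¬ d ∣ V := by
    intro h
    exact hdβ (by
      have : d ∣ β + V - V := Nat.dvd_sub (hVβ ▸ hdp) h
      simpa using this)
  have hdJ : ¬ d ∣ J := by
    intro h
    exact hdV (by
      have : d ∣ J - p := Nat.dvd_sub h hdp
      simpa [hJ_def] using this)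
  have hJZ : (J : ℤ) = 2 * p - β := by
    have := hVβ
    push_cast [hJ_def]
    omega
  -- layer 1 facts
  obtain ⟨hYfL, hA⟩ := yf_low p F Yf hYf hFlow hFlead
  set A := PowerSeries.coeff p Yf with hA_def
  have hAne : A ≠ 0 := by
    intro h
    rw [h, zero_mul] at hA
    exact zero_ne_one hA
  obtain ⟨hYglow, hYgp⟩ := yg_low p S Yf Yg hS0 hS1 hcomp (by
    intro j hj
    have := hYfL (j : ℤ) hj
    rwa [HahnSeries.ofPowerSeries_apply_coeff] at this)
  set A' := PowerSeries.coeff p Yg with hA'_def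
  have hA'ne : A' ≠ 0 := by
    intro h
    rw [h, mul_zero] at hYgp
    exact hAne hYgp.symm
  obtain ⟨hG0, hGp⟩ := g_order p G Yg hYg hYglow hA'ne
  have hGpne : G.coeff (-(p : ℤ)) ≠ 0 := by
    intro h
    rw [h, mul_zero] at hGp
    exact zero_ne_one hGp
  -- the shifted series u
  obtain ⟨u, hu⟩ : (PowerSeries.X : PowerSeries K) ∣ S := PowerSeries.X_dvd_iff.mpr hS0
  have hSk : ∀ k n : ℕ, PowerSeries.coeff n (S ^ k)
      = if k ≤ n then PowerSeries.coeff (n - k) (u ^ k) else 0 := by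
    intro k n
    rw [hu, mul_pow, mul_comm ((PowerSeries.X : PowerSeries K) ^ k),
      PowerSeries.coeff_mul_X_pow']
  have hc1 : c = PowerSeries.constantCoeff u := by
    rw [hc_def, hu, PowerSeries.coeff_succ_X_mul, PowerSeries.coeff_zero_eq_constantCoeff]
  have hSdiag : ∀ k : ℕ, PowerSeries.coeff k (S ^ k) = c ^ k := by
    intro k
    rw [hSk, if_pos le_rfl, Nat.sub_self, PowerSeries.coeff_zero_eq_constantCoeff, map_pow, hc1]
  have hu0 : PowerSeries.constantCoeff u ≠ 0 := by rw [← hc1]; exact hS1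
  -- relation between S^(p+q) and Yf
  have hfe : (HahnSeries.ofPowerSeries ℤ K (S ^ (p + q)) : LaurentSeries K)
      = -(HahnSeries.single ((q : ℕ) : ℤ) (1 : K)) * (HahnSeries.ofPowerSeries ℤ K Yf) := by
    have h1 : (HahnSeries.ofPowerSeries ℤ K S : LaurentSeries K) ^ (p + q) * F *
        (HahnSeries.ofPowerSeries ℤ K Yf) =
        -(HahnSeries.single ((q : ℕ) : ℤ) (1 : K)) * (HahnSeries.ofPowerSeries ℤ K Yf) := by
      rw [hSpow]
    rw [mul_assoc, mul_comm F, hYf, mul_one] at h1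
    rw [map_pow]
    exact h1
  have hSY : ∀ n : ℤ, (HahnSeries.ofPowerSeries ℤ K (S ^ (p + q))).coeff n
      = -(HahnSeries.ofPowerSeries ℤ K Yf).coeff (n - q) := by
    intro n
    have hms : -(HahnSeries.single ((q : ℕ) : ℤ) (1 : K))
        = HahnSeries.single ((q : ℕ) : ℤ) (-1 : K) := by
      ext j
      rw [HahnSeries.coeff_neg, HahnSeries.coeff_single, HahnSeries.coeff_single]
      split <;> simp
    have hsingle := HahnSeries.coeff_single_mul_add (r := (-1 : K))
      (x := (HahnSeries.ofPowerSeries ℤ K Yf)) (a := n - (q : ℤ)) (b := (q : ℤ))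
    rw [sub_add_cancel] at hsingle
    rw [hfe, hms, hsingle, neg_one_mul]
  -- leading coefficient relation
  have hca : c ^ (p + q) * a = -1 := by
    have h0 : ((HahnSeries.ofPowerSeries ℤ K S : LaurentSeries K) ^ (p + q) * F).coeff
        ((q : ℕ) : ℤ) = -1 := by
      rw [hSpow, HahnSeries.coeff_neg, HahnSeries.coeff_single_same]
    rw [← map_pow] at h0
    rw [laurent_mul_coeff_eq_sum _ _ _ {((p + q : ℕ) : ℤ)} ?_] at h0
    · rw [Finset.sum_singleton, HahnSeries.ofPowerSeries_apply_coeff,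
        show ((q : ℕ) : ℤ) - ((p + q : ℕ) : ℤ) = -(p : ℤ) by push_cast; ring,
        hSdiag] at h0
      exact h0
    · intro x hx hFx
      have hx0 : 0 ≤ x := ofPS_coeff_nonneg _ hx
      lift x to ℕ using hx0
      rw [HahnSeries.ofPowerSeries_apply_coeff, hSk] at hx
      have hxge : p + q ≤ x := by
        by_contra hc'
        rw [if_neg hc'] at hx
        exact hx rfl
      have hxle : (x : ℤ) ≤ (p : ℤ) + q := by
        by_contra hgt
        push_neg at hgt
        exact hFx (hFlow _ (by omega))
      simp only [Finset.mem_singleton]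
      push_cast
      omega
  have hane : a ≠ 0 := hFlead
  have hcne : c ≠ 0 := hS1
  -- bad coefficients of Yf
  have H3nat : ∀ n : ℕ, ¬ d ∣ n → n < J → PowerSeries.coeff n Yf = 0 := by
    intro n
    induction n using Nat.strong_induction_on with
    | _ n IH =>
      intro hnd hnJ
      rcases lt_or_ge (n : ℤ) (p : ℤ) with hnp | hnp
      · have := hYfL (n : ℤ) hnp
        rwa [HahnSeries.ofPowerSeries_apply_coeff] at this
      have hnep : n ≠ p := by
        intro h
        exact hnd (h ▸ hdp)
      have h0 : ((HahnSeries.ofPowerSeries ℤ K Yf) * F).coeff ((n : ℤ) - p) = 0 := by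
        rw [hYf, HahnSeries.coeff_one, if_neg (by omega)]
      rw [laurent_mul_coeff_eq_sum _ _ _ {(n : ℤ)} ?_] at h0
      · rw [Finset.sum_singleton, show (n : ℤ) - ↑p - ↑n = -(p : ℤ) by ring,
          HahnSeries.ofPowerSeries_apply_coeff] at h0
        exact (mul_eq_zero.mp h0).resolve_right hFlead
      · intro x hx hFx
        have hx0 : 0 ≤ x := ofPS_coeff_nonneg _ hx
        lift x to ℕ using hx0
        rw [HahnSeries.ofPowerSeries_apply_coeff] at hx
        have hxp : ¬ (x : ℤ) < (p : ℤ) := by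
          intro hc'
          exact hx (by
            have := hYfL (x : ℤ) hc'
            rwa [HahnSeries.ofPowerSeries_apply_coeff] at this)
        have hxle : (x : ℤ) ≤ n := by
          by_contra hgt
          push_neg at hgt
          exact hFx (hFlow _ (by omega))
        simp only [Finset.mem_singleton]
        by_contra hxn
        have hxltn : x < n := by omega
        by_cases hdx : d ∣ x
        · -- good x: use hν on the F coefficient
          have hybad : ¬ ((d : ℤ) ∣ ((n : ℤ) - p - x)) := by
            intro hy
            apply hnd
            have : (d : ℤ) ∣ (n : ℤ) := by
              have hn : (n : ℤ) = ((n : ℤ) - p - x) + p + x := by ring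
              rw [hn]
              exact dvd_add (dvd_add hy hdpZ) (Int.natCast_dvd_natCast.mpr hdx)
            exact_mod_cast Int.natCast_dvd_natCast.mp this
          have := hν _ hFx hybad
          omega
        · exact hx (IH x hxltn hdx (by omega))
  have H3 : ∀ j : ℤ, ¬ ((d : ℤ) ∣ j) → j < (J : ℤ) →
      (HahnSeries.ofPowerSeries ℤ K Yf).coeff j = 0 := by
    intro j hjd hjJ
    rcases lt_or_ge j 0 with h | h
    · exact ofPS_coeff_neg _ h
    · lift j to ℕ using h
      rw [HahnSeries.ofPowerSeries_apply_coeff]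
      exact H3nat j (fun hc' => hjd (Int.natCast_dvd_natCast.mpr hc')) (by exact_mod_cast hjJ)
  -- the J coefficient of Yf
  set yfJ := PowerSeries.coeff J Yf with hyfJ_def
  have H4 : A * b + yfJ * a = 0 := by
    have h0 : ((HahnSeries.ofPowerSeries ℤ K Yf) * F).coeff ((V : ℕ) : ℤ) = 0 := by
      rw [hYf, HahnSeries.coeff_one, if_neg (by push_cast; omega)]
    rw [laurent_mul_coeff_eq_sum _ _ _ {(p : ℤ), (J : ℤ)} ?_] at h0
    · rw [Finset.sum_insert (by simp only [Finset.mem_singleton]; push_cast; omega),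
        Finset.sum_singleton, HahnSeries.ofPowerSeries_apply_coeff,
        HahnSeries.ofPowerSeries_apply_coeff,
        show ((V : ℕ) : ℤ) - p = -(β : ℤ) by push_cast; omega,
        show ((V : ℕ) : ℤ) - (J : ℤ) = -(p : ℤ) by push_cast; omega] at h0
      exact h0
    · intro x hx hFx
      have hx0 : 0 ≤ x := ofPS_coeff_nonneg _ hx
      lift x to ℕ using hx0
      rw [HahnSeries.ofPowerSeries_apply_coeff] at hx
      have hxp : (p : ℤ) ≤ (x : ℤ) := by
        by_contra hc'
        push_neg at hc'
        exact hx (by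
          have := hYfL (x : ℤ) hc'
          rwa [HahnSeries.ofPowerSeries_apply_coeff] at this)
      have hxle : (x : ℤ) ≤ (J : ℤ) := by
        by_contra hgt
        push_neg at hgt
        exact hFx (hFlow _ (by push_cast at hgt ⊢; omega))
      simp only [Finset.mem_insert, Finset.mem_singleton]
      by_cases hdx : d ∣ x
      · left
        have hybad : ¬ ((d : ℤ) ∣ (((V : ℕ) : ℤ) - x)) := by
          intro hy
          apply hdV
          have : (d : ℤ) ∣ ((V : ℕ) : ℤ) := by
            have hv : ((V : ℕ) : ℤ) = (((V : ℕ) : ℤ) - x) + x := by ring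
            rw [hv]
            exact dvd_add hy (Int.natCast_dvd_natCast.mpr hdx)
          exact_mod_cast Int.natCast_dvd_natCast.mp this
        have := hν _ hFx hybad
        push_cast at this hxp ⊢
        omega
      · right
        have : ¬ (x : ℤ) < (J : ℤ) := by
          intro hc'
          exact hx (by
            have := H3 (x : ℤ) (fun hcc => hdx (Int.natCast_dvd_natCast.mp hcc)) hc'
            rwa [HahnSeries.ofPowerSeries_apply_coeff] at this)
        exact_mod_cast le_antisymm hxle (by omega)
  have hyfJne : yfJ ≠ 0 := by
    intro h
    rw [h, zero_mul, add_zero] at H4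
    exact (mul_ne_zero hAne hb) H4
  -- MG property of u
  have hupq : MG d V (u ^ (p + q)) := by
    intro n hn
    have hcoe : PowerSeries.coeff n (u ^ (p + q))
        = PowerSeries.coeff (n + (p + q)) (S ^ (p + q)) := by
      rw [hSk, if_pos (by omega), Nat.add_sub_cancel]
    rw [hcoe] at hn
    have hn' : (HahnSeries.ofPowerSeries ℤ K Yf).coeff ((n : ℤ) + p) ≠ 0 := by
      have h1 : (HahnSeries.ofPowerSeries ℤ K (S ^ (p + q))).coeff (((n + (p + q) : ℕ)) : ℤ)
          ≠ 0 := by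
        rw [HahnSeries.ofPowerSeries_apply_coeff]
        exact hn
      rw [hSY] at h1
      have : (((n + (p + q) : ℕ)) : ℤ) - q = (n : ℤ) + p := by push_cast; ring
      rw [this] at h1
      intro h2
      rw [h2] at h1
      exact h1 (neg_zero)
    by_contra hbad
    push_neg at hbad
    apply hn'
    apply H3
    · intro hcc
      apply hbad.1
      have : (d : ℤ) ∣ (n : ℤ) := by
        have hn2 : (n : ℤ) = ((n : ℤ) + p) - p := by ring
        rw [hn2]
        exact dvd_sub hcc hdpZ
      exact_mod_cast this
    · push_cast
      omega
  have huM : MG d V u := MG.of_pow (by omega) hu0 hupq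
  -- the key coefficient λ of u
  set lam := PowerSeries.coeff V u with hlam_def
  have hmuV : ∀ m : ℕ, PowerSeries.coeff V (u ^ m) = (m : K) * c ^ (m - 1) * lam := by
    intro m
    rw [MG.coeff_V_pow hdV huM m, ← hc1]
  have hlamval : ((p + q : ℕ) : K) * c ^ (p + q - 1) * lam = -yfJ := by
    rw [← hmuV]
    have hcoe : PowerSeries.coeff V (u ^ (p + q))
        = PowerSeries.coeff (V + (p + q)) (S ^ (p + q)) := by
      rw [hSk, if_pos (by omega), Nat.add_sub_cancel]
    rw [hcoe]
    have h1 : (HahnSeries.ofPowerSeries ℤ K (S ^ (p + q))).coeff (((V + (p + q) : ℕ)) : ℤ)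
        = -yfJ := by
      rw [hSY, show (((V + (p + q) : ℕ)) : ℤ) - q = ((J : ℕ) : ℤ) by
          rw [hJ_def]; push_cast; ring,
        HahnSeries.ofPowerSeries_apply_coeff, hyfJ_def]
    calc PowerSeries.coeff (V + (p + q)) (S ^ (p + q))
        = (HahnSeries.ofPowerSeries ℤ K (S ^ (p + q))).coeff (((V + (p + q) : ℕ)) : ℤ) :=
          (HahnSeries.ofPowerSeries_apply_coeff _ _).symm
      _ = -yfJ := h1
  have hlamne : lam ≠ 0 := by
    intro h
    rw [h, mul_zero] at hlamval
    exact hyfJne (neg_eq_zero.mp hlamval.symm)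
  -- bad coefficients of Yg
  have H7 : ∀ n : ℕ, ¬ d ∣ n → n < J → PowerSeries.coeff n Yg = 0 := by
    intro n
    induction n using Nat.strong_induction_on with
    | _ n IH =>
      intro hnd hnJ
      rcases lt_or_ge n p with hnp | hnp
      · exact hYglow n hnp
      have h0 := hcomp n
      have hLHS : PowerSeries.coeff n Yf = 0 := H3nat n hnd hnJ
      rw [hLHS] at h0
      rw [Finset.sum_eq_single n ?_ (by intro h; simp at h)] at h0
      · rw [hSdiag] at h0
        exact (mul_eq_zero.mp h0.symm).resolve_right (pow_ne_zero _ hcne)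
      · intro k hk hkn
        have hkle : k ≤ n := by simp at hk; omega
        rcases lt_or_ge k p with hkp | hkp
        · rw [hYglow k hkp, zero_mul]
        by_cases hdk : d ∣ k
        · rw [hSk, if_pos hkle]
          have hnk : ¬ d ∣ (n - k) := by
            intro hcc
            exact hnd (by
              have : n = (n - k) + k := by omega
              rw [this]
              exact dvd_add hcc hdk)
          have hnkV : n - k < V := by omega
          have := huM.pow k
          rcases Classical.em (PowerSeries.coeff (n - k) (u ^ k) = 0) with h | h
          · rw [h, mul_zero]
          · rcases this (n - k) h with hh | hh
            · exact absurd hh hnk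
            · omega
        · rw [IH k (by omega) hdk (by omega), zero_mul]
  -- the J coefficient of Yg
  set b' := PowerSeries.coeff J Yg with hb'_def
  have H8 : yfJ = A' * ((p : K) * c ^ (p - 1) * lam) + b' * c ^ J := by
    have h0 := hcomp J
    rw [← hyfJ_def] at h0
    rw [← Finset.sum_subset (show ({p, J} : Finset ℕ) ⊆ Finset.range (J + 1) by
        intro x hx
        simp only [Finset.mem_insert, Finset.mem_singleton] at hx
        simp only [Finset.mem_range]
        omega) ?_] at h0
    · rw [Finset.sum_insert (by simp only [Finset.mem_singleton]; omega),
        Finset.sum_singleton, hSdiag, hSk, if_pos (by omega : p ≤ J),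
        show J - p = V by omega, hmuV] at h0
      rw [h0, hA'_def, hb'_def]
    · intro k hk hknotin
      simp only [Finset.mem_insert, Finset.mem_singleton] at hknotin
      push_neg at hknotin
      have hkle : k ≤ J := by simp at hk; omega
      rcases lt_or_ge k p with hkp | hkp
      · rw [hYglow k hkp, zero_mul]
      by_cases hdk : d ∣ k
      · rw [hSk, if_pos hkle]
        have hJk : ¬ d ∣ (J - k) := by
          intro hcc
          exact hdJ (by
            have : J = (J - k) + k := by omega
            rw [this]
            exact dvd_add hcc hdk)
        have hkp' : p < k := by
          rcases Nat.lt_or_ge p k with h | h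
          · exact h
          · exfalso
            have : k = p := by omega
            exact hknotin.1 this
        have hJkV : J - k < V := by omega
        rcases Classical.em (PowerSeries.coeff (J - k) (u ^ k) = 0) with h | h
        · rw [h, mul_zero]
        · rcases (huM.pow k) (J - k) h with hh | hh
          · exact absurd hh hJk
          · omega
      · rw [H7 k hdk (by omega), zero_mul]
  -- b' is nonzero
  have hb'ne : b' ≠ 0 := by
    intro hb'0
    rw [hb'0, zero_mul, add_zero] at H8
    -- now yfJ = A' * (p * c^(p-1) * lam); combine with hlamval etc.
    have hp1 : p - 1 + 1 = p := by omega
    have hpq1 : p + q - 1 + 1 = p + q := by omega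
    have hcp : c ^ p = c ^ (p - 1) * c := by rw [← pow_succ, hp1]
    have hcpq : c ^ (p + q) = c ^ (p + q - 1) * c := by rw [← pow_succ, hpq1]
    have h4 : A' * ((p : K) * c ^ (p - 1) * lam) = -(((p + q : ℕ) : K) * c ^ (p + q - 1) * lam) := by
      rw [← H8, hlamval]
      ring
    have h4' : A' * (p : K) * c ^ (p - 1) = -(((p + q : ℕ) : K) * c ^ (p + q - 1)) := by
      apply mul_right_cancel₀ hlamne
      calc A' * (p : K) * c ^ (p - 1) * lam = A' * ((p : K) * c ^ (p - 1) * lam) := by ring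
        _ = -(((p + q : ℕ) : K) * c ^ (p + q - 1) * lam) := h4
        _ = -(((p + q : ℕ) : K) * c ^ (p + q - 1)) * lam := by ring
    have e1 : A' * (p : K) * c ^ (p - 1) * (c * a)
        = -(((p + q : ℕ) : K) * c ^ (p + q - 1)) * (c * a) := by rw [h4']
    have e2 : A' * (p : K) * c ^ (p - 1) * (c * a) = (p : K) := by
      calc A' * (p : K) * c ^ (p - 1) * (c * a)
          = (c ^ (p - 1) * c * A') * a * (p : K) := by ring
        _ = (c ^ p * A') * a * (p : K) := by rw [← hcp]
        _ = A * a * (p : K) := by rw [hYgp]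
        _ = (p : K) := by rw [hA]; ring
    have e3 : -(((p + q : ℕ) : K) * c ^ (p + q - 1)) * (c * a) = ((p + q : ℕ) : K) := by
      calc -(((p + q : ℕ) : K) * c ^ (p + q - 1)) * (c * a)
          = -(((p + q : ℕ) : K) * (c ^ (p + q - 1) * c * a)) := by ring
        _ = -(((p + q : ℕ) : K) * (c ^ (p + q) * a)) := by rw [← hcpq]
        _ = -(((p + q : ℕ) : K) * (-1)) := by rw [hca]
        _ = ((p + q : ℕ) : K) := by ring
    have : (p : K) = ((p + q : ℕ) : K) := by rw [← e2, e1, e3]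
    have hq0 : (q : K) = 0 := by
      push_cast at this
      rwa [left_eq_add] at this
    exact (Nat.cast_ne_zero.mpr hq.ne') hq0
  -- bad coefficients of G vanish below -β
  have hYgLlow : ∀ x : ℤ, (HahnSeries.ofPowerSeries ℤ K Yg).coeff x ≠ 0 → (p : ℤ) ≤ x := by
    intro x hx
    have hx0 : 0 ≤ x := ofPS_coeff_nonneg _ hx
    lift x to ℕ using hx0
    rw [HahnSeries.ofPowerSeries_apply_coeff] at hx
    by_contra hc'
    exact hx (hYglow x (by omega))
  have H9aux : ∀ n : ℕ, ∀ i : ℤ, i + p ≤ n → ¬ ((d : ℤ) ∣ i) → i < -(β : ℤ) →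
      G.coeff i = 0 := by
    intro n
    induction n using Nat.strong_induction_on with
    | _ n IH =>
      intro i hin hid hiβ
      rcases lt_or_ge i (-(p : ℤ)) with h | h
      · exact hG0 i h
      have hip : -(p : ℤ) < i := by
        rcases lt_or_eq_of_le h with h' | h'
        · exact h'
        · exfalso
          exact hid (h' ▸ (dvd_neg.mpr hdpZ))
      have h0 : ((HahnSeries.ofPowerSeries ℤ K Yg) * G).coeff ((p : ℤ) + i) = 0 := by
        rw [hYg, HahnSeries.coeff_one, if_neg (by omega)]
      rw [laurent_mul_coeff_eq_sum _ _ _ {(p : ℤ)} ?_] at h0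
      · rw [Finset.sum_singleton, show (p : ℤ) + i - p = i by ring,
          HahnSeries.ofPowerSeries_apply_coeff] at h0
        exact (mul_eq_zero.mp h0).resolve_left hA'ne
      · intro x hx hGx
        have hxp : (p : ℤ) ≤ x := hYgLlow x hx
        simp only [Finset.mem_singleton]
        by_contra hxn
        have hx0 : 0 ≤ x := by omega
        lift x to ℕ using hx0
        rw [HahnSeries.ofPowerSeries_apply_coeff] at hx
        by_cases hdx : d ∣ x
        · -- good x > p : recurse
          have hxgt : (p : ℤ) < x := by
            rcases lt_or_eq_of_le hxp with h' | h'
            · exact h'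
            · exfalso; exact hxn h'.symm
          have hybad : ¬ ((d : ℤ) ∣ ((p : ℤ) + i - x)) := by
            intro hy
            apply hid
            have : i = ((p : ℤ) + i - x) + x - p := by ring
            rw [this]
            exact dvd_sub (dvd_add hy (Int.natCast_dvd_natCast.mpr hdx)) hdpZ
          have hylt : (p : ℤ) + i - x < i := by omega
          have := IH (((p : ℤ) + i - x) + p).toNat (by omega) ((p : ℤ) + i - x)
            (by omega) hybad (by omega)
          exact hGx this
        · -- bad x : x ≥ J, so the G coefficient is below -p
          have hxJ : (J : ℤ) ≤ (x : ℤ) := by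
            by_contra hc'
            push_neg at hc'
            exact hx (H7 x hdx (by exact_mod_cast hc'))
          have : (p : ℤ) + i - x < -(p : ℤ) := by omega
          exact hGx (hG0 _ this)
  have H9 : ∀ i : ℤ, ¬ ((d : ℤ) ∣ i) → i < -(β : ℤ) → G.coeff i = 0 :=
    fun i hid hiβ => H9aux (i + p).toNat i (Int.self_le_toNat _) hid hiβ
  constructor
  · intro i hGi hbad
    by_contra h
    push_neg at h
    exact hGi (H9 i hbad h)
  · have h0 : ((HahnSeries.ofPowerSeries ℤ K Yg) * G).coeff ((p : ℤ) - β) = 0 := by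
      rw [hYg, HahnSeries.coeff_one, if_neg (by omega)]
    rw [laurent_mul_coeff_eq_sum _ _ _ {(p : ℤ), (J : ℤ)} ?_] at h0
    · rw [Finset.sum_insert (by simp only [Finset.mem_singleton]; omega),
        Finset.sum_singleton, HahnSeries.ofPowerSeries_apply_coeff,
        HahnSeries.ofPowerSeries_apply_coeff,
        show (p : ℤ) - β - p = -(β : ℤ) by ring,
        show (p : ℤ) - β - (J : ℤ) = -(p : ℤ) by omega] at h0
      intro hzero
      rw [hzero, mul_zero, zero_add] at h0
      exact (mul_ne_zero hb'ne hGpne) h0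
    · intro x hx hGx
      have hxp : (p : ℤ) ≤ x := hYgLlow x hx
      have hxle : x ≤ (J : ℤ) := by
        by_contra hgt
        push_neg at hgt
        exact hGx (hG0 _ (by omega))
      simp only [Finset.mem_insert, Finset.mem_singleton]
      have hx0 : 0 ≤ x := by omega
      lift x to ℕ using hx0
      rw [HahnSeries.ofPowerSeries_apply_coeff] at hx
      by_cases hdx : d ∣ x
      · left
        by_contra hxnp
        have hxgt : (p : ℤ) < (x : ℤ) := by
          rcases lt_or_eq_of_le hxp with h' | h'
          · exact h'
          · exact absurd (by exact_mod_cast h'.symm) hxnp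
        have hybad : ¬ ((d : ℤ) ∣ ((p : ℤ) - β - x)) := by
          intro hy
          apply hdβ
          have : (d : ℤ) ∣ (β : ℤ) := by
            have hβ : (β : ℤ) = (p : ℤ) - x - ((p : ℤ) - β - x) := by ring
            rw [hβ]
            exact dvd_sub (dvd_sub hdpZ (Int.natCast_dvd_natCast.mpr hdx)) hy
          exact_mod_cast this
        exact hGx (H9 _ hybad (by omega))
      · right
        have hxJ : (J : ℕ) ≤ x := by
          by_contra hc'
          push_neg at hc'
          exact hx (H7 x hdx hc')
        exact_mod_cast le_antisymm hxle (by exact_mod_cast hxJ)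

end LFAux

set_option maxHeartbeats 1000000 in
/-- Suppose the irreducible `E_{f,q}` has dual Puiseux characteristic
`(q, p; β 1, …, β g)`.  The local Fourier transform `F^{(0,∞)}(E_{f,q}) ≅ E_{g,p+q}` is
encoded as follows: `F` is the expansion of `f` in `t = x^{1/q}` (`f` at the origin),
`G` that of `g` in `s = ζ̂^{1/(p+q)}` where `ζ̂ = -x/f` (from the stationary phase
relation `f = -z·ẑ`), so `s^{p+q}·F = -t^q` under the change of parameter `s = S(t)`,
and `1/g ∘ S = 1/f` (the relation `g = f` up to the irrelevant constant shift).  Then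
`E_{g,p+q}` has dual Puiseux characteristic `(p+q, β 1; β 1, …, β g)` if `p = β 1`,
and `(p+q, p; p, β 1, …, β g)` otherwise. -/
theorem fourier_zero_inf_dualPuiseux {K : Type*} [Field K] [CharZero K] [IsAlgClosed K]
    (q p : ℕ) (hq : 0 < q) (hp : 0 < p)
    (F : LaurentSeries K)
    (hFlow : ∀ n : ℤ, n < -(p : ℤ) → F.coeff n = 0)
    (hFlead : F.coeff (-(p : ℤ)) ≠ 0)
    (hFirr : RamIrred q q F)
    (g : ℕ) (hg : 0 < g) (β e : ℕ → ℕ)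
    (hchar : DualChar q (fun n => F.coeff n ≠ 0) g β e)
    (G : LaurentSeries K) (hG : G ≠ 0)
    (Yf Yg : PowerSeries K)
    (hYf : (HahnSeries.ofPowerSeries ℤ K Yf : LaurentSeries K) * F = 1)
    (hYg : (HahnSeries.ofPowerSeries ℤ K Yg : LaurentSeries K) * G = 1)
    (S : PowerSeries K)
    (hS0 : PowerSeries.constantCoeff S = 0)
    (hS1 : PowerSeries.coeff 1 S ≠ 0)
    (hSpow : (HahnSeries.ofPowerSeries ℤ K S : LaurentSeries K) ^ (p + q) * F =
      -(HahnSeries.single (q : ℤ) (1 : K)))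
    (hcomp : Composed S Yg Yf) :
    G.order = -(p : ℤ) ∧
    (p = β 1 →
      ∃ e' : ℕ → ℕ, DualChar (p + q) (fun n => G.coeff n ≠ 0) g β e') ∧
    (p ≠ β 1 →
      ∃ e' : ℕ → ℕ, DualChar (p + q) (fun n => G.coeff n ≠ 0) (g + 1)
        (fun k => if k = 1 then p else β (k - 1)) e') := by
  obtain ⟨he0, heg, hche⟩ := hchar
  -- positivity of e
  have hepos : ∀ k, k ≤ g → 0 < e k := by
    intro k
    induction k with
    | zero => intro _; omega
    | succ k ih =>
      intro hk
      obtain ⟨_, _, _, hgcd⟩ := hche k (by omega)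
      rw [hgcd]
      exact Nat.gcd_pos_of_pos_left _ (ih (by omega))
  -- β bounded by p
  have hβle : ∀ k, k < g → β (k + 1) ≤ p := by
    intro k hk
    obtain ⟨hsup, _, _, _⟩ := hche k hk
    by_contra hc
    push_neg at hc
    exact hsup (hFlow _ (by omega))
  -- β strictly decreasing
  have hdec : ∀ k, k + 1 < g → β (k + 1 + 1) < β (k + 1) := by
    intro k hk
    obtain ⟨hsup1, hnd1, hmin1, hgcd1⟩ := hche k (by omega)
    obtain ⟨hsup2, hnd2, hmin2, hgcd2⟩ := hche (k + 1) hk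
    have hnd2' : ¬ ((e k : ℤ) ∣ (β (k + 1 + 1) : ℤ)) := by
      intro hc
      apply hnd2
      have hnat : e k ∣ β (k + 1 + 1) := Int.natCast_dvd_natCast.mp hc
      have : e (k + 1) ∣ β (k + 1 + 1) := by
        rw [hgcd1]
        exact (Nat.gcd_dvd_left _ _).trans hnat
      exact_mod_cast Int.natCast_dvd_natCast.mpr this
    have hnd2'' : ¬ ((e k : ℤ) ∣ (-(β (k + 1 + 1) : ℤ))) := by
      rw [Int.dvd_neg]
      exact hnd2'
    have hle := hmin1 _ hsup2 hnd2''
    have hne : β (k + 1 + 1) ≠ β (k + 1) := by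
      intro hc
      apply hnd2
      rw [hc, hgcd1]
      exact Int.natCast_dvd_natCast.mpr (Nat.gcd_dvd_right _ _)
    omega
  -- comparison with β 1
  have hchain : ∀ k, k < g → β (k + 1) ≤ β 1 ∧ (1 ≤ k → β (k + 1) < β 1) := by
    intro k
    induction k with
    | zero => intro _; exact ⟨le_rfl, fun h => absurd h (by omega)⟩
    | succ k ih =>
      intro hk
      have h1 := hdec k hk
      have h2 := ih (by omega)
      exact ⟨by omega, fun _ => by omega⟩
  -- dichotomy
  have hdich : ∀ k, k < g → β (k + 1) < p → e k ∣ p := by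
    intro k hk hlt
    obtain ⟨hsup, hnd, hmin, hgcd⟩ := hche k hk
    by_contra hc
    have hcz : ¬ ((e k : ℤ) ∣ (-(p : ℤ))) := by
      rw [Int.dvd_neg]
      exact fun h => hc (Int.natCast_dvd_natCast.mp h)
    have := hmin _ hFlead hcz
    omega
  -- layer 1 facts
  obtain ⟨hYfL, hA⟩ := LFAux.yf_low p F Yf hYf hFlow hFlead
  have hAne : PowerSeries.coeff p Yf ≠ 0 := by
    intro h
    rw [h, zero_mul] at hA
    exact zero_ne_one hA
  obtain ⟨hYglow, hYgp⟩ := LFAux.yg_low p S Yf Yg hS0 hS1 hcomp (by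
    intro j hj
    have := hYfL (j : ℤ) hj
    rwa [HahnSeries.ofPowerSeries_apply_coeff] at this)
  have hA'ne : PowerSeries.coeff p Yg ≠ 0 := by
    intro h
    rw [h, mul_zero] at hYgp
    exact hAne hYgp.symm
  obtain ⟨hG0, hGp⟩ := LFAux.g_order p G Yg hYg hYglow hA'ne
  have hGpne : G.coeff (-(p : ℤ)) ≠ 0 := by
    intro h
    rw [h, mul_zero] at hGp
    exact zero_ne_one hGp
  have horder : G.order = -(p : ℤ) := by
    have hle := HahnSeries.order_le_of_coeff_ne_zero hGpne
    by_contra hne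
    have hlt : G.order < -(p : ℤ) := lt_of_le_of_ne hle hne
    exact (mt HahnSeries.coeff_order_eq_zero.mp hG) (hG0 _ hlt)
  have hnpq : ¬ (((p + q : ℕ) : ℤ) ∣ ((p : ℕ) : ℤ)) := by
    intro h
    have h2 := Int.le_of_dvd (by exact_mod_cast hp) h
    push_cast at h2
    omega
  -- transfer helper
  have htrans : ∀ k, k < g → β (k + 1) < p →
      ((∀ i : ℤ, G.coeff i ≠ 0 → ¬ ((e k : ℤ) ∣ i) → -(β (k + 1) : ℤ) ≤ i) ∧
        G.coeff (-(β (k + 1) : ℤ)) ≠ 0) := by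
    intro k hk hlt
    obtain ⟨hsup, hnd, hmin, hgcd⟩ := hche k hk
    exact LFAux.transfer q p hq hp F hFlow hFlead G Yf Yg hYf hYg S hS0 hS1 hSpow hcomp
      (e k) (β (k + 1)) (hdich k hk hlt)
      (fun hc => hnd (Int.natCast_dvd_natCast.mpr hc)) hlt hmin hsup
  have hminp : ∀ i : ℤ, G.coeff i ≠ 0 → -(p : ℤ) ≤ i := by
    intro i hi
    by_contra hc
    push_neg at hc
    exact hi (hG0 _ hc)
  refine ⟨horder, ?_, ?_⟩
  · -- case p = β 1
    intro hpβ
    refine ⟨fun j => if j = 0 then p + q else e j, if_pos rfl, ?_, ?_⟩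
    · beta_reduce
      rw [if_neg (by omega : g ≠ 0)]
      exact heg
    · intro k hk
      beta_reduce
      rcases Nat.eq_zero_or_pos k with rfl | hk1
      · refine ⟨?_, ?_, ?_, ?_⟩
        · show G.coeff (-(β 1 : ℤ)) ≠ 0
          rw [← hpβ]
          exact hGpne
        · rw [if_pos rfl, ← hpβ]
          exact hnpq
        · intro i hi _
          rw [← hpβ]
          exact hminp i hi
        · rw [if_neg (by omega : (1 : ℕ) ≠ 0), if_pos rfl]
          have h1 := (hche 0 hg).2.2.2
          rw [he0] at h1
          rw [h1, ← hpβ]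
          rw [show p + q = q + p by omega, Nat.gcd_add_self_left]
      · have hlt : β (k + 1) < p := by
          have := (hchain k hk).2 hk1
          omega
        obtain ⟨hmin', hne'⟩ := htrans k hk hlt
        obtain ⟨hsup, hnd, hmin, hgcd⟩ := hche k hk
        refine ⟨hne', ?_, ?_, ?_⟩
        · rw [if_neg (by omega : k ≠ 0)]
          exact hnd
        · intro i hi hbad
          rw [if_neg (by omega : k ≠ 0)] at hbad
          exact hmin' i hi hbad
        · rw [if_neg (by omega : k ≠ 0), if_neg (by omega : k + 1 ≠ 0)]
          exact hgcd
  · -- case p ≠ β 1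
    intro hpβ
    have hβ1 : β 1 < p := lt_of_le_of_ne (hβle 0 hg) (fun h => hpβ h.symm)
    have hqp : q ∣ p := he0 ▸ hdich 0 hg hβ1
    refine ⟨fun j => if j = 0 then p + q else e (j - 1), if_pos rfl, ?_, ?_⟩
    · beta_reduce
      rw [if_neg (by omega : g + 1 ≠ 0), show g + 1 - 1 = g by omega]
      exact heg
    · intro k hk
      beta_reduce
      rcases Nat.eq_zero_or_pos k with rfl | hk1
      · refine ⟨?_, ?_, ?_, ?_⟩
        · show G.coeff (-((if 0 + 1 = 1 then p else β (0 + 1 - 1)) : ℤ)) ≠ 0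
          rw [if_pos rfl]
          exact hGpne
        · rw [if_pos rfl]
          simp only [if_pos rfl]
          exact hnpq
        · intro i hi _
          simp only [if_pos rfl]
          exact hminp i hi
        · norm_num
          rw [he0]
          exact (Nat.gcd_eq_left hqp).symm
      · have hk' : k - 1 < g := by omega
        have hlt : β (k - 1 + 1) < p := by
          have := (hchain (k - 1) hk').1
          omega
        obtain ⟨hmin', hne'⟩ := htrans (k - 1) hk' hlt
        obtain ⟨hsup, hnd, hmin, hgcd⟩ := hche (k - 1) hk'
        have hidx : k - 1 + 1 = k := by omega
        refine ⟨?_, ?_, ?_, ?_⟩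
        · rw [if_neg (by omega : k + 1 ≠ 1), show k + 1 - 1 = k by omega, ← hidx]
          exact hne'
        · rw [if_neg (by omega : k ≠ 0), if_neg (by omega : k + 1 ≠ 1),
            show k + 1 - 1 = k by omega, ← hidx]
          exact hnd
        · intro i hi hbad
          rw [if_neg (by omega : k ≠ 0)] at hbad
          rw [if_neg (by omega : k + 1 ≠ 1), show k + 1 - 1 = k by omega, ← hidx]
          exact hmin' i hi hbad
        · rw [if_neg (by omega : k ≠ 0), if_neg (by omega : k + 1 ≠ 0),
            if_neg (by omega : k + 1 ≠ 1),
            show k + 1 - 1 = k by omega, ← hidx]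
          exact hgcd
end
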